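/- arXiv:0901.4030 — 8 statements merged into one kernel-verified Lean document; each statement's English description precedes it below -/
import Mathlib

section
/- Let n ≥ 1 and let f and g be monic complex polynomials of degree n. Then the sets {z ∈ ℂ : Re(f(z)) = 0} and {z ∈ ℂ : Re(g(z)) = 0} are equal if and only if f − g is a constant purely imaginary polynomial, i.e., there exists t ∈ ℝ such that f(z) − g(z) = t·i for all z. -/
open Polynomial Complex Finset

lemma evalBound (p : ℂ[X]) (m : ℕ) (hm : p.natDegree ≤ m) (z : ℂ) (hz : 1 ≤ ‖z‖) :
    ‖p.eval z‖ ≤ (∑ k ∈ Finset.range (m + 1), ‖p.coeff k‖) * ‖z‖ ^ m := by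
  rw [Polynomial.eval_eq_sum_range' (Nat.lt_succ_of_le hm)]
  rw [Finset.sum_mul]
  refine le_trans (norm_sum_le _ _) (Finset.sum_le_sum fun k hk => ?_)
  rw [norm_mul, norm_pow]
  have : ‖z‖ ^ k ≤ ‖z‖ ^ m :=
    pow_le_pow_right₀ hz (Nat.lt_succ_iff.mp (Finset.mem_range.mp hk))
  exact mul_le_mul_of_nonneg_left this (norm_nonneg _)

lemma circlePoints (n : ℕ) (hn : 1 ≤ n) (f : ℂ[X]) (hf : f.Monic) (hfd : f.natDegree = n) :
    ∃ (R : ℝ) (s : Finset ℂ), 0 < R ∧ s.card = 2 * n ∧ (∀ w ∈ s, ‖w‖ = 1) ∧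
      ∀ w ∈ s, (f.eval ((R : ℂ) * w)).re = 0 := by
  have hπ : (0 : ℝ) < Real.pi := Real.pi_pos
  set r : ℂ[X] := f - X ^ n with hr
  have hrdeg : r.natDegree ≤ n - 1 := by
    have hdlt : r.degree < (n : ℕ) := by
      have h1 : f.degree = (X ^ n : ℂ[X]).degree := by
        rw [degree_X_pow, degree_eq_natDegree hf.ne_zero, hfd]
      have h2 : f.leadingCoeff = (X ^ n : ℂ[X]).leadingCoeff := by
        rw [hf.leadingCoeff, (monic_X_pow n).leadingCoeff]
      have := degree_sub_lt h1 hf.ne_zero h2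
      rw [degree_eq_natDegree hf.ne_zero, hfd] at this
      exact this
    rcases eq_or_ne r 0 with h | h
    · simp [h]
    · have := (natDegree_lt_iff_degree_lt h).mpr hdlt
      omega
  set C : ℝ := ∑ k ∈ Finset.range n, ‖r.coeff k‖ with hC
  have hC0 : 0 ≤ C := Finset.sum_nonneg fun k _ => norm_nonneg _
  set R : ℝ := C + 1 with hRdef
  have hR1 : 1 ≤ R := by simp [hRdef]; linarith
  have hRpos : (0 : ℝ) < R := by linarith
  set F : ℝ → ℝ := fun θ => (f.eval ((R : ℂ) * Complex.exp (θ * Complex.I))).re with hF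
  have hFc : Continuous F := by
    apply Complex.continuous_re.comp
    exact (f.continuous).comp (continuous_const.mul
      (Complex.continuous_exp.comp (Complex.continuous_ofReal.mul continuous_const)))
  -- key estimate
  have key : ∀ θ : ℝ, |F θ - R ^ n * Real.cos (n * θ)| ≤ C * R ^ (n - 1) := by
    intro θ
    set z : ℂ := (R : ℂ) * Complex.exp (θ * Complex.I) with hz
    have habs : ‖z‖ = R := by
      rw [hz, norm_mul, Complex.norm_exp_ofReal_mul_I, Complex.norm_of_nonneg hRpos.le,
        mul_one]
    have hfz : f.eval z = z ^ n + r.eval z := by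
      have : f = X ^ n + r := by rw [hr]; ring
      rw [this]; simp
    have hzn : (z ^ n).re = R ^ n * Real.cos (n * θ) := by
      rw [hz, mul_pow, ← Complex.exp_nat_mul]
      have h1 : (n : ℂ) * (↑θ * Complex.I) = (↑(n * θ : ℝ)) * Complex.I := by
        push_cast; ring
      rw [h1]
      have h2 : ((R : ℂ) ^ n) = ((R ^ n : ℝ) : ℂ) := by push_cast; rfl
      rw [h2, Complex.re_ofReal_mul, Complex.exp_ofReal_mul_I_re]
    have : F θ - R ^ n * Real.cos (n * θ) = (r.eval z).re := by
      rw [hF]; simp only []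
      rw [← hz, hfz, Complex.add_re, hzn]; ring
    rw [this]
    refine le_trans (Complex.abs_re_le_norm _) ?_
    have := evalBound r (n - 1) hrdeg z (by rw [habs]; exact hR1)
    rw [habs] at this
    have hn1 : n - 1 + 1 = n := by omega
    rw [hn1] at this
    exact this
  -- angles
  set θ : ℕ → ℝ := fun j => j * Real.pi / n with hθ
  have hθmono : ∀ a b : ℕ, a < b → θ a < θ b := by
    intro a b hab
    rw [hθ]
    have hnpos : (0 : ℝ) < n := by exact_mod_cast hn
    have : (a : ℝ) < b := by exact_mod_cast hab
    have h2 : (a : ℝ) * Real.pi < b * Real.pi := by nlinarith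
    exact div_lt_div_of_pos_right h2 hnpos
  have hnpos : (0 : ℝ) < n := by exact_mod_cast hn
  have hθ0 : θ 0 = 0 := by simp [hθ]
  have hθ2n : θ (2 * n) = 2 * Real.pi := by
    rw [hθ]; push_cast; field_simp
  have hθmono' : ∀ a b : ℕ, a ≤ b → θ a ≤ θ b := by
    intro a b hab
    rcases eq_or_lt_of_le hab with h | h
    · rw [h]
    · exact (hθmono a b h).le
  have hcos : ∀ j : ℕ, Real.cos (n * θ j) = (-1 : ℝ) ^ j := by
    intro j
    have hn0 : (n : ℝ) ≠ 0 := ne_of_gt hnpos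
    have h1 : (n : ℝ) * θ j = j * Real.pi := by rw [hθ]; field_simp
    rw [h1]
    simpa using Real.cos_nat_mul_pi_sub 0 j
  have hRn : R ^ n = R ^ (n - 1) * C + R ^ (n - 1) := by
    have h1 : R ^ n = R ^ (n - 1) * R := by
      rw [← pow_succ]; congr 1; omega
    rw [h1, hRdef]; ring
  have hpw : 0 < R ^ (n - 1) := pow_pos hRpos _
  have hpos : ∀ j : ℕ, Even j → 0 < F (θ j) := by
    intro j hj
    have hk := abs_le.mp (key (θ j))
    rw [hcos j, hj.neg_one_pow] at hk
    have := hk.1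
    linarith
  have hneg : ∀ j : ℕ, Odd j → F (θ j) < 0 := by
    intro j hj
    have hk := abs_le.mp (key (θ j))
    rw [hcos j, hj.neg_one_pow] at hk
    have := hk.2
    linarith
  have hex : ∀ j : ℕ, ∃ x, j < 2 * n → x ∈ Set.Ioo (θ j) (θ (j + 1)) ∧ F x = 0 := by
    intro j
    have hlt : θ j ≤ θ (j + 1) := hθmono' j (j + 1) (by omega)
    rcases Nat.even_or_odd j with he | ho
    · have h1 : 0 < F (θ j) := hpos j he
      have h2 : F (θ (j + 1)) < 0 := hneg (j + 1) (Even.add_one he)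
      obtain ⟨x, hx, hfx⟩ := intermediate_value_Ioo' hlt hFc.continuousOn ⟨h2, h1⟩
      exact ⟨x, fun _ => ⟨hx, hfx⟩⟩
    · have h1 : F (θ j) < 0 := hneg j ho
      have h2 : 0 < F (θ (j + 1)) := hpos (j + 1) (Odd.add_one ho)
      obtain ⟨x, hx, hfx⟩ := intermediate_value_Ioo hlt hFc.continuousOn ⟨h1, h2⟩
      exact ⟨x, fun _ => ⟨hx, hfx⟩⟩
  choose x hx using hex
  have hxIoo : ∀ j, j < 2 * n → θ j < x j ∧ x j < θ (j + 1) := by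
    intro j hj
    obtain ⟨h1, _⟩ := hx j hj
    exact ⟨h1.1, h1.2⟩
  have hxF : ∀ j, j < 2 * n → F (x j) = 0 := fun j hj => (hx j hj).2
  have hbounds : ∀ j, j < 2 * n → 0 < x j ∧ x j < 2 * Real.pi := by
    intro j hj
    obtain ⟨h1, h2⟩ := hxIoo j hj
    constructor
    · have : θ 0 ≤ θ j := hθmono' 0 j (by omega)
      rw [hθ0] at this; linarith
    · have : θ (j + 1) ≤ θ (2 * n) := hθmono' (j + 1) (2 * n) (by omega)
      rw [hθ2n] at this; linarith
  set w : ℕ → ℂ := fun j => Complex.exp ((x j : ℂ) * Complex.I) with hw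
  have hinj : Set.InjOn w ↑(Finset.range (2 * n)) := by
    intro a ha b hb hab
    simp only [Finset.coe_range, Set.mem_Iio] at ha hb
    have hxeq : x a = x b := by
      obtain ⟨k, hk⟩ := Complex.exp_eq_exp_iff_exists_int.mp hab
      have him := congrArg Complex.im hk
      simp [Complex.add_im, Complex.mul_im, Complex.mul_re] at him
      have hba := hbounds a ha
      have hbb := hbounds b hb
      have hk0 : k = 0 := by
        have hlt1 : (k : ℝ) < 1 := by nlinarith [him, hba.1, hba.2, hbb.1, hbb.2, hπ]
        have hgt1 : (-1 : ℝ) < k := by nlinarith [him, hba.1, hba.2, hbb.1, hbb.2, hπ]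
        have hg : (-1 : ℤ) < k := by exact_mod_cast hgt1
        have hl : k < 1 := by exact_mod_cast hlt1
        omega
      rw [hk0] at him
      simpa using him
    by_contra hne
    rcases lt_trichotomy a b with h | h | h
    · have h1 := (hxIoo a ha).2
      have h2 := (hxIoo b hb).1
      have h3 : θ (a + 1) ≤ θ b := hθmono' (a + 1) b (by omega)
      linarith
    · exact hne h
    · have h1 := (hxIoo b hb).2
      have h2 := (hxIoo a ha).1
      have h3 : θ (b + 1) ≤ θ a := hθmono' (b + 1) a (by omega)
      linarith
  refine ⟨R, (Finset.range (2 * n)).image w, hRpos, ?_, ?_, ?_⟩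
  · rw [Finset.card_image_of_injOn hinj, Finset.card_range]
  · intro u hu
    obtain ⟨j, _, rfl⟩ := Finset.mem_image.mp hu
    exact Complex.norm_exp_ofReal_mul_I _
  · intro u hu
    obtain ⟨j, hj, rfl⟩ := Finset.mem_image.mp hu
    exact hxF j (Finset.mem_range.mp hj)


lemma trigKey (p : ℂ[X]) (d : ℕ) (hd : p.natDegree ≤ d) (R : ℝ) (hR : 0 < R)
    (s : Finset ℂ) (hcard : 2 * d < s.card)
    (hunit : ∀ w ∈ s, ‖w‖ = 1)
    (hzero : ∀ w ∈ s, (p.eval ((R : ℂ) * w)).re = 0) :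
    (∀ k, 1 ≤ k → p.coeff k = 0) ∧ (p.coeff 0).re = 0 := by
  set q : ℂ[X] :=
    (∑ k ∈ Finset.range (d + 1), C (p.coeff k * (R : ℂ) ^ k) * X ^ (d + k)) +
      (∑ k ∈ Finset.range (d + 1), C ((starRingEnd ℂ) (p.coeff k) * (R : ℂ) ^ k) * X ^ (d - k))
    with hq
  have hqdeg : q.natDegree ≤ 2 * d := by
    apply le_trans (natDegree_add_le _ _)
    apply max_le
    · apply natDegree_sum_le_of_forall_le
      intro k hk
      refine le_trans (natDegree_C_mul_X_pow_le _ _) ?_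
      have := Finset.mem_range.mp hk; omega
    · apply natDegree_sum_le_of_forall_le
      intro k hk
      refine le_trans (natDegree_C_mul_X_pow_le _ _) ?_
      omega
  have hqeval : ∀ w ∈ s, q.eval w = 0 := by
    intro w hw
    have hw1 : ‖w‖ = 1 := hunit w hw
    have hw0 : w ≠ 0 := by
      intro h; rw [h] at hw1; simp at hw1
    have hwinv : (starRingEnd ℂ) w = w⁻¹ := by
      rw [Complex.inv_def]
      simp [Complex.normSq_eq_norm_sq, hw1]
    have heval : p.eval ((R : ℂ) * w) = ∑ k ∈ Finset.range (d + 1), p.coeff k * ((R : ℂ) * w) ^ k :=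
      Polynomial.eval_eq_sum_range' (Nat.lt_succ_of_le hd) _
    have h1 : (∑ k ∈ Finset.range (d + 1), C (p.coeff k * (R : ℂ) ^ k) * X ^ (d + k)).eval w
        = w ^ d * p.eval ((R : ℂ) * w) := by
      rw [heval, Finset.mul_sum]
      rw [eval_finset_sum]
      refine Finset.sum_congr rfl fun k hk => ?_
      simp [pow_add, mul_pow]
      ring
    have h2 : (∑ k ∈ Finset.range (d + 1), C ((starRingEnd ℂ) (p.coeff k) * (R : ℂ) ^ k) * X ^ (d - k)).eval w
        = w ^ d * (starRingEnd ℂ) (p.eval ((R : ℂ) * w)) := by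
      rw [heval, map_sum, Finset.mul_sum]
      rw [eval_finset_sum]
      refine Finset.sum_congr rfl fun k hk => ?_
      have hk' : k ≤ d := Nat.lt_succ_iff.mp (Finset.mem_range.mp hk)
      rw [eval_mul, eval_C, eval_pow, eval_X, pow_sub₀ w hw0 hk', map_mul, map_pow, map_mul, hwinv,
        Complex.conj_ofReal, mul_pow, inv_pow]
      ring
    have : q.eval w = w ^ d * (p.eval ((R : ℂ) * w) + (starRingEnd ℂ) (p.eval ((R : ℂ) * w))) := by
      rw [hq, eval_add, h1, h2]; ring
    rw [this, Complex.add_conj, hzero w hw]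
    simp
  have hq0 : q = 0 := by
    apply Polynomial.eq_zero_of_natDegree_lt_card_of_eval_eq_zero' q s hqeval
    omega
  -- now extract coefficients
  have hcoeff : ∀ m : ℕ, q.coeff m = 0 := by rw [hq0]; simp
  have hRne : (R : ℂ) ≠ 0 := by
    simpa using ne_of_gt hR
  constructor
  · intro k hk
    by_cases hkd : k ≤ d
    · have := hcoeff (d + k)
      rw [hq, coeff_add, finset_sum_coeff, finset_sum_coeff] at this
      simp only [coeff_C_mul_X_pow] at this
      rw [Finset.sum_eq_single k (fun x hx hxne => by
        have : ¬ (d + k = d + x) := by omega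
        simp [this, hxne.symm]) (fun h => by exfalso; exact h (Finset.mem_range.mpr (by omega)))] at this
      rw [if_pos rfl] at this
      have h2z : (∑ x ∈ Finset.range (d + 1),
          if d + k = d - x then (starRingEnd ℂ) (p.coeff x) * (R:ℂ) ^ x else 0) = 0 := by
        apply Finset.sum_eq_zero
        intro x hx
        have : ¬ (d + k = d - x) := by omega
        simp [this]
      rw [h2z, add_zero] at this
      rcases mul_eq_zero.mp this with h | h
      · exact h
      · exact absurd (pow_eq_zero_iff (by omega) |>.mp h) hRne
    · exact coeff_eq_zero_of_natDegree_lt (by omega)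
  · have := hcoeff d
    rw [hq, coeff_add, finset_sum_coeff, finset_sum_coeff] at this
    simp only [coeff_C_mul_X_pow] at this
    have h1 : (∑ x ∈ Finset.range (d + 1),
        if d = d + x then p.coeff x * (R:ℂ) ^ x else 0) = p.coeff 0 := by
      rw [Finset.sum_eq_single 0]
      · simp
      · intro x hx hxne
        have : ¬ (d = d + x) := by omega
        simp [this, hxne]
      · intro h; simp at h
    have h2 : (∑ x ∈ Finset.range (d + 1),
        if d = d - x then (starRingEnd ℂ) (p.coeff x) * (R:ℂ) ^ x else 0)
        = (starRingEnd ℂ) (p.coeff 0) := by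
      rw [Finset.sum_eq_single 0]
      · simp
      · intro x hx hxne
        have hx' : x ≤ d := Nat.lt_succ_iff.mp (Finset.mem_range.mp hx)
        have : ¬ (d = d - x) := by omega
        simp [this]
      · intro h; simp at h
    rw [h1, h2, Complex.add_conj] at this
    have h4 : 2 * (p.coeff 0).re = 0 := by exact_mod_cast this
    linarith

/-- For monic complex polynomials `f` and `g` of degree `n ≥ 1`, the real components
`R(f) = {z | Re (f z) = 0}` and `R(g)` coincide iff `f - g` is a constant purely
imaginary polynomial. -/
theorem stmt0 (n : ℕ) (hn : 1 ≤ n) (f g : Polynomial ℂ)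
    (hf : f.Monic) (hg : g.Monic) (hfd : f.natDegree = n) (hgd : g.natDegree = n) :
    {z : ℂ | (f.eval z).re = 0} = {z : ℂ | (g.eval z).re = 0} ↔
      ∃ t : ℝ, ∀ z : ℂ, f.eval z - g.eval z = (t : ℂ) * Complex.I := by
  constructor
  · intro hset
    have hsub : ∀ z : ℂ, (f.eval z).re = 0 → (g.eval z).re = 0 := by
      intro z hz
      have := Set.ext_iff.mp hset z
      simpa using this.mp hz
    set h : ℂ[X] := f - g with hh
    have hhdeg : h.natDegree ≤ n - 1 := by
      have hdlt : h.degree < (n : ℕ) := by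
        have h1 : f.degree = g.degree := by
          rw [degree_eq_natDegree hf.ne_zero, degree_eq_natDegree hg.ne_zero, hfd, hgd]
        have h2 : f.leadingCoeff = g.leadingCoeff := by rw [hf.leadingCoeff, hg.leadingCoeff]
        have := degree_sub_lt h1 hf.ne_zero h2
        rw [degree_eq_natDegree hf.ne_zero, hfd] at this
        exact this
      rcases eq_or_ne h 0 with h0 | h0
      · simp [h0]
      · have := (natDegree_lt_iff_degree_lt h0).mpr hdlt
        omega
    obtain ⟨R, s, hRpos, hcard, hunit, hzero⟩ := circlePoints n hn f hf hfd
    have hhzero : ∀ w ∈ s, (h.eval ((R : ℂ) * w)).re = 0 := by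
      intro w hw
      rw [hh, eval_sub, Complex.sub_re, hzero w hw, hsub _ (hzero w hw)]
      ring
    obtain ⟨hk, h0re⟩ := trigKey h (n - 1) hhdeg R hRpos s (by omega) hunit hhzero
    refine ⟨(h.coeff 0).im, fun z => ?_⟩
    have heval : h.eval z = h.coeff 0 := by
      rw [Polynomial.eval_eq_sum_range' (show h.natDegree < n by omega)]
      rw [Finset.sum_eq_single 0]
      · simp
      · intro k _ hkne
        rw [hk k (by omega)]; ring
      · intro hcon; exact absurd (Finset.mem_range.mpr (by omega)) hcon
    have : f.eval z - g.eval z = h.coeff 0 := by rw [← heval, hh, eval_sub]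
    rw [this]
    apply Complex.ext
    · simpa using h0re
    · simp
  · rintro ⟨t, ht⟩
    ext z
    simp only [Set.mem_setOf_eq]
    have h1 : (f.eval z).re - (g.eval z).re = 0 := by
      have := congrArg Complex.re (ht z)
      simpa [Complex.sub_re] using this
    constructor <;> intro <;> linarith
end

section
/- Let n ≥ 1 and let f and g be monic complex polynomials of degree n. Then the sets {z ∈ ℂ : Im(f(z)) = 0} and {z ∈ ℂ : Im(g(z)) = 0} are equal if and only if f − g is a constant real polynomial, i.e., there exists t ∈ ℝ such that f(z) − g(z) = t for all z. -/
set_option maxHeartbeats 1000000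

open Polynomial Complex

lemma evalBound_s1 (p : Polynomial ℂ) (d : ℕ) (hd : p.natDegree ≤ d) :
    ∃ C : ℝ, 0 ≤ C ∧ ∀ z : ℂ, 1 ≤ ‖z‖ →
      ‖p.eval z‖ ≤ C * ‖z‖ ^ d := by
  refine ⟨∑ k ∈ Finset.range (p.natDegree + 1), ‖p.coeff k‖,
    Finset.sum_nonneg fun _ _ => norm_nonneg _, fun z hz => ?_⟩
  rw [Polynomial.eval_eq_sum_range]
  calc ‖∑ k ∈ Finset.range (p.natDegree + 1), p.coeff k * z ^ k‖
      ≤ ∑ k ∈ Finset.range (p.natDegree + 1), ‖p.coeff k * z ^ k‖ :=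
        norm_sum_le _ _
    _ ≤ ∑ k ∈ Finset.range (p.natDegree + 1), ‖p.coeff k‖ * ‖z‖ ^ d := by
        refine Finset.sum_le_sum fun k hk => ?_
        rw [norm_mul, norm_pow]
        refine mul_le_mul_of_nonneg_left ?_ (norm_nonneg _)
        exact pow_le_pow_right₀ hz (by have := Finset.mem_range.mp hk; omega)
    _ = _ := by rw [← Finset.sum_mul]

lemma absRexp (R θ : ℝ) (hR : 0 ≤ R) : ‖(R:ℂ) * Complex.exp ((θ:ℂ) * Complex.I)‖ = R := by
  rw [norm_mul, Complex.norm_exp_ofReal_mul_I, mul_one, Complex.norm_real, Real.norm_eq_abs, _root_.abs_of_nonneg hR]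

lemma pow_rexp (R θ : ℝ) (j : ℕ) :
    ((R:ℂ) * Complex.exp ((θ:ℂ) * Complex.I)) ^ j
      = ((R ^ j : ℝ) : ℂ) * Complex.exp (((j * θ : ℝ) : ℂ) * Complex.I) := by
  rw [mul_pow, ← Complex.exp_nat_mul]
  push_cast
  ring_nf

lemma im_rexp (r x : ℝ) : (((r:ℝ):ℂ) * Complex.exp ((x:ℂ) * Complex.I)).im = r * Real.sin x := by
  rw [Complex.im_ofReal_mul, Complex.exp_ofReal_mul_I_im]

lemma near (f : Polynomial ℂ) (n : ℕ) (hn : 1 ≤ n) (hf : f.Monic) (hfd : f.natDegree = n)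
    (k : ℕ) (δ M : ℝ) (hδ : 0 < δ) (hM : 1 ≤ M) :
    ∃ R θ : ℝ, M ≤ R ∧ |θ - k * Real.pi / n| ≤ δ ∧
      (f.eval ((R : ℂ) * Complex.exp ((θ:ℂ) * Complex.I))).im = 0 := by
  have npos : (0:ℝ) < n := by exact_mod_cast hn
  have hπ := Real.pi_pos
  set e := f.eraseLead with he_def
  have he : e.natDegree ≤ n - 1 := (f.eraseLead_natDegree_le).trans (by omega)
  obtain ⟨C, hC0, hC⟩ := evalBound_s1 e (n-1) he
  have feval : ∀ z : ℂ, f.eval z = z ^ n + e.eval z := by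
    intro z
    have := f.eraseLead_add_C_mul_X_pow
    rw [hf.leadingCoeff, hfd] at this
    conv_lhs => rw [← this]
    simp [add_comm, he_def]
  -- choose parameters
  set δ' := min (n * δ) (Real.pi / 2) with hδ'_def
  have hδ'0 : 0 < δ' := lt_min (by positivity) (by positivity)
  have hδ'le : δ' ≤ Real.pi / 2 := min_le_right _ _
  set s := Real.sin δ' with hs_def
  have hs : 0 < s := Real.sin_pos_of_pos_of_lt_pi hδ'0 (by linarith)
  have hs1 : s ≤ 1 := Real.sin_le_one _
  set R := max M (C / s + 1) with hR_def
  have hRM : M ≤ R := le_max_left _ _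
  have hR1 : 1 ≤ R := hM.trans hRM
  have hR0 : 0 < R := by linarith
  have hCs : C / s + 1 ≤ R := le_max_right _ _
  have hCR : C / R < s := by
    rw [div_lt_iff₀ hR0]
    have h1 : C / s < R := by linarith
    rw [div_lt_iff₀ hs] at h1
    linarith
  have hCltR : C < R := by
    have : C ≤ C / s := by
      rw [le_div_iff₀ hs]; nlinarith
    linarith
  -- the two angles
  set a := (k * Real.pi - Real.pi / 2) / n with ha_def
  set b := (k * Real.pi + Real.pi / 2) / n with hb_def
  have hab : a ≤ b := by
    rw [ha_def, hb_def]
    gcongr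
    linarith
  set φ : ℝ → ℝ := fun θ => (f.eval ((R:ℂ) * Complex.exp ((θ:ℂ) * Complex.I))).im with hφ_def
  have hcont : Continuous φ := by
    apply Complex.continuous_im.comp
    apply (Polynomial.continuous f).comp
    exact continuous_const.mul (Complex.continuous_exp.comp (Complex.continuous_ofReal.mul continuous_const))
  have φval : ∀ θ : ℝ, φ θ = R ^ n * Real.sin (n * θ)
      + (e.eval ((R:ℂ) * Complex.exp ((θ:ℂ) * Complex.I))).im := by
    intro θ
    rw [hφ_def]
    simp only [feval, Complex.add_im, pow_rexp, im_rexp]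
  have Ebound : ∀ θ : ℝ, |(e.eval ((R:ℂ) * Complex.exp ((θ:ℂ) * Complex.I))).im| ≤ C * R ^ (n-1) := by
    intro θ
    refine (Complex.abs_im_le_norm _).trans ?_
    have := hC ((R:ℂ) * Complex.exp ((θ:ℂ) * Complex.I)) (by rw [absRexp R θ hR0.le]; exact hR1)
    rwa [absRexp R θ hR0.le] at this
  have hRn : R ^ (n-1) * R = R ^ n := by
    rw [← pow_succ]; congr 1; omega
  have hRpow : C * R ^ (n-1) < R ^ n := by
    rw [← hRn]
    have : (0:ℝ) < R ^ (n-1) := by positivity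
    nlinarith
  -- cos k pi is ±1
  set σ := Real.cos (k * Real.pi) with hσ_def
  have hσ : σ = 1 ∨ σ = -1 := by
    have h1 : Real.sin (k * Real.pi) = 0 := Real.sin_nat_mul_pi k
    have h2 := Real.sin_sq_add_cos_sq (k * Real.pi)
    have : (σ - 1) * (σ + 1) = 0 := by rw [hσ_def]; nlinarith
    rcases mul_eq_zero.mp this with h | h
    · left; linarith
    · right; linarith
  have hna : (n:ℝ) * a = k * Real.pi - Real.pi / 2 := by
    rw [ha_def]; field_simp
  have hnb : (n:ℝ) * b = k * Real.pi + Real.pi / 2 := by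
    rw [hb_def]; field_simp
  have hsina : Real.sin ((n:ℝ) * a) = -σ := by
    rw [hna, Real.sin_sub, Real.sin_pi_div_two, Real.cos_pi_div_two, hσ_def]
    ring
  have hsinb : Real.sin ((n:ℝ) * b) = σ := by
    rw [hnb, Real.sin_add, Real.sin_pi_div_two, Real.cos_pi_div_two, hσ_def]
    ring
  have h0mem : (0:ℝ) ∈ Set.uIcc (φ a) (φ b) := by
    have hEa := Ebound a
    have hEb := Ebound b
    have hφa := φval a
    have hφb := φval b
    rw [hsina] at hφa
    rw [hsinb] at hφb
    rw [Set.mem_uIcc]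
    rcases hσ with h | h <;> rw [h] at hφa hφb
    · left
      constructor
      · rw [hφa]; rw [abs_le] at hEa; nlinarith
      · rw [hφb]; rw [abs_le] at hEb; nlinarith
    · right
      constructor
      · rw [hφb]; rw [abs_le] at hEb; nlinarith
      · rw [hφa]; rw [abs_le] at hEa; nlinarith
  obtain ⟨θ, hθmem, hθ0⟩ := intermediate_value_uIcc (hcont.continuousOn) h0mem
  rw [Set.uIcc_of_le hab] at hθmem
  obtain ⟨hθa, hθb⟩ := hθmem
  -- bound on n θ - k π
  set x := (n:ℝ) * θ - k * Real.pi with hx_def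
  have hx2 : |x| ≤ Real.pi / 2 := by
    rw [abs_le, hx_def]
    constructor
    · have := mul_le_mul_of_nonneg_left hθa npos.le
      rw [hna] at this; linarith
    · have := mul_le_mul_of_nonneg_left hθb npos.le
      rw [hnb] at this; linarith
  have hsin_nθ : Real.sin ((n:ℝ)*θ) = σ * Real.sin x := by
    have : (n:ℝ)*θ = x + k * Real.pi := by rw [hx_def]; ring
    rw [this, Real.sin_add, Real.sin_nat_mul_pi, hσ_def]
    ring
  have hsin_small : |Real.sin ((n:ℝ)*θ)| ≤ C / R := by
    have hφθ := φval θ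
    rw [hθ0] at hφθ
    have hE := Ebound θ
    have : R ^ n * |Real.sin ((n:ℝ)*θ)| ≤ C * R ^ (n-1) := by
      rw [← abs_of_pos (show (0:ℝ) < R ^ n by positivity), ← abs_mul]
      rw [show R ^ n * Real.sin ((n:ℝ)*θ) = -(e.eval ((R:ℂ) * Complex.exp ((θ:ℂ) * Complex.I))).im by linarith]
      rwa [abs_neg]
    rw [le_div_iff₀ hR0]
    have hpow : (0:ℝ) < R ^ (n-1) := by positivity
    have h2 : (|Real.sin ((n:ℝ)*θ)| * R) * R ^ (n-1) ≤ C * R ^ (n-1) := by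
      calc (|Real.sin ((n:ℝ)*θ)| * R) * R ^ (n-1) = R ^ n * |Real.sin ((n:ℝ)*θ)| := by
            rw [← hRn]; ring
        _ ≤ C * R ^ (n-1) := this
    exact le_of_mul_le_mul_right h2 hpow
  -- |x| ≤ δ'
  have habsσ : |σ| = 1 := by rcases hσ with h | h <;> rw [h] <;> simp
  have hsinx_small : |Real.sin x| < s := by
    have : |Real.sin ((n:ℝ)*θ)| = |Real.sin x| := by
      rw [hsin_nθ, abs_mul, habsσ, one_mul]
    rw [← this]
    exact lt_of_le_of_lt hsin_small hCR
  have hxδ' : |x| ≤ δ' := by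
    by_contra hcon
    push_neg at hcon
    have h1 : Real.sin δ' < Real.sin |x| := by
      exact Real.strictMonoOn_sin ⟨by linarith, hδ'le⟩ ⟨by linarith [abs_nonneg x], hx2⟩ hcon
    have h2 : Real.sin |x| = |Real.sin x| := by
      rcases le_or_gt 0 x with hx0 | hx0
      · rw [_root_.abs_of_nonneg hx0, _root_.abs_of_nonneg]
        exact Real.sin_nonneg_of_nonneg_of_le_pi hx0 (by linarith [le_abs_self x])
      · rw [_root_.abs_of_neg hx0, Real.sin_neg, _root_.abs_of_nonpos]
        have h3 : 0 ≤ Real.sin (-x) :=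
          Real.sin_nonneg_of_nonneg_of_le_pi (by linarith) (by linarith [neg_le_abs x])
        rw [Real.sin_neg] at h3; linarith
    rw [h2] at h1
    linarith [hsinx_small]
  refine ⟨R, θ, hRM, ?_, hθ0⟩
  have hx_eq : θ - k * Real.pi / n = x / n := by
    rw [hx_def]; field_simp
  rw [hx_eq, abs_div, abs_of_pos npos]
  rw [div_le_iff₀ npos]
  have : δ' ≤ n * δ := min_le_left _ _
  linarith

lemma expDist (a b : ℝ) (h : |a - b| ≤ 1) :
    ‖Complex.exp ((a:ℂ) * Complex.I) - Complex.exp ((b:ℂ) * Complex.I)‖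
      ≤ 2 * |a - b| := by
  have h1 : (a:ℂ) * Complex.I = (b:ℂ) * Complex.I + (((a - b : ℝ)):ℂ) * Complex.I := by
    push_cast; ring
  have h2 : Complex.exp ((a:ℂ) * Complex.I) - Complex.exp ((b:ℂ) * Complex.I)
      = Complex.exp ((b:ℂ) * Complex.I) * (Complex.exp ((((a - b : ℝ)):ℂ) * Complex.I) - 1) := by
    rw [h1, Complex.exp_add]; ring
  have h3 : ‖(((a - b : ℝ)):ℂ) * Complex.I‖ = |a - b| := by
    rw [norm_mul, Complex.norm_I, mul_one, Complex.norm_real, Real.norm_eq_abs]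
  rw [h2, norm_mul, Complex.norm_exp_ofReal_mul_I, one_mul]
  calc ‖Complex.exp ((((a - b : ℝ)):ℂ) * Complex.I) - 1‖
      ≤ 2 * ‖(((a - b : ℝ)):ℂ) * Complex.I‖ :=
        Complex.norm_exp_sub_one_le (by rw [h3]; exact h)
    _ = 2 * |a - b| := by rw [h3]

lemma key (f h : Polynomial ℂ) (n : ℕ) (hn : 1 ≤ n) (hf : f.Monic) (hfd : f.natDegree = n)
    (hh : h ≠ 0) (hm1 : 1 ≤ h.natDegree) (hmn : h.natDegree < n)
    (H : ∀ z : ℂ, (f.eval z).im = 0 → (h.eval z).im = 0) : False := by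
  have npos : (0:ℝ) < n := by exact_mod_cast hn
  set m := h.natDegree with hm_def
  set c := h.leadingCoeff with hc_def
  have hc0 : c ≠ 0 := leadingCoeff_ne_zero.mpr hh
  have hcabs : 0 < ‖c‖ := norm_pos_iff.mpr hc0
  have mpos : (0:ℝ) < m := by exact_mod_cast hm1
  obtain ⟨C, hC0, hC⟩ := evalBound_s1 h.eraseLead (m-1) (h.eraseLead_natDegree_le.trans (by omega))
  have heval : ∀ z : ℂ, h.eval z - c * z ^ m = (h.eraseLead).eval z := by
    intro z
    have h1 := h.eraseLead_add_C_mul_X_pow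
    rw [← hc_def, ← hm_def] at h1
    conv_lhs => rw [← h1]
    simp
  -- Main claim
  have claim : ∀ k : ℕ, (c * Complex.exp (((k * m * Real.pi / n : ℝ) : ℂ) * Complex.I)).im = 0 := by
    intro k
    by_contra hne
    set A := (c * Complex.exp (((k * m * Real.pi / n : ℝ) : ℂ) * Complex.I)).im with hA_def
    have hApos : 0 < |A| := abs_pos.mpr hne
    have hAc : |A| ≤ ‖c‖ := by
      refine (Complex.abs_im_le_norm _).trans ?_
      rw [norm_mul, Complex.norm_exp_ofReal_mul_I, mul_one]
    set δ := |A| / (8 * ‖c‖ * m + 1) with hδ_def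
    have hδpos : 0 < δ := by positivity
    set M := max 1 (4 * C / |A| + 1) with hM_def
    have hM1 : (1:ℝ) ≤ M := le_max_left _ _
    obtain ⟨R, θ, hMR, hθ, him⟩ := near f n hn hf hfd k δ M hδpos hM1
    have hR1 : (1:ℝ) ≤ R := hM1.trans hMR
    have hR0 : (0:ℝ) < R := by linarith
    set z := (R:ℂ) * Complex.exp ((θ:ℂ) * Complex.I) with hz_def
    have hzim : (h.eval z).im = 0 := H z him
    have hzabs : ‖z‖ = R := absRexp R θ hR0.le
    -- the comparison point
    set B := h.eval z / (((R ^ m : ℝ)) : ℂ) with hB_def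
    have hBim : B.im = 0 := by
      rw [hB_def, Complex.div_ofReal_im, hzim, zero_div]
    -- term 2 : |c * exp(imθ) - B| ≤ C / R
    have hterm2 : ‖c * Complex.exp (((m * θ : ℝ) : ℂ) * Complex.I) - B‖ ≤ C / R := by
      have hzm : (z : ℂ) ^ m = ((R ^ m : ℝ) : ℂ) * Complex.exp (((m * θ : ℝ) : ℂ) * Complex.I) :=
        pow_rexp R θ m
      have hRm : ((R ^ m : ℝ) : ℂ) ≠ 0 := by
        simp only [ne_eq, Complex.ofReal_eq_zero]
        positivity
      have : c * Complex.exp (((m * θ : ℝ) : ℂ) * Complex.I) - B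
          = (c * z ^ m - h.eval z) / ((R ^ m : ℝ) : ℂ) := by
        rw [hB_def, hzm]
        rw [sub_div, mul_div_assoc, mul_div_cancel_left₀ _ hRm]
      rw [this, norm_div]
      have habs1 : ‖c * z ^ m - h.eval z‖ ≤ C * R ^ (m - 1) := by
        rw [← norm_neg, neg_sub, heval z]
        have := hC z (by rw [hzabs]; exact hR1)
        rwa [hzabs] at this
      have habs2 : ‖((( R ^ m : ℝ)) : ℂ)‖ = R ^ m := by
        rw [Complex.norm_real, Real.norm_eq_abs, _root_.abs_of_pos (by positivity)]
      rw [habs2]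
      rw [div_le_div_iff₀ (by positivity) hR0]
      calc ‖c * z ^ m - h.eval z‖ * R ≤ (C * R ^ (m-1)) * R := by
            exact mul_le_mul_of_nonneg_right habs1 hR0.le
        _ = C * (R ^ (m-1) * R) := by ring
        _ = C * R ^ m := by rw [← pow_succ]; congr 2; omega
    -- term 1
    have hmδ : (m:ℝ) * δ ≤ 1 := by
      rw [hδ_def, ← mul_div_assoc, div_le_one (by positivity)]
      nlinarith
    have hdab : |(k * m * Real.pi / n : ℝ) - (m * θ : ℝ)| ≤ m * δ := by
      have hdd : (k * m * Real.pi / n : ℝ) - (m * θ : ℝ) = m * -(θ - k * Real.pi / n) := by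
        field_simp; ring
      rw [hdd, abs_mul, abs_neg, Nat.abs_cast]
      exact mul_le_mul_of_nonneg_left hθ mpos.le
    have hterm1 : ‖c * Complex.exp (((k * m * Real.pi / n : ℝ) : ℂ) * Complex.I)
        - c * Complex.exp (((m * θ : ℝ) : ℂ) * Complex.I)‖ ≤ ‖c‖ * (2 * (m * δ)) := by
      rw [← mul_sub, norm_mul]
      refine mul_le_mul_of_nonneg_left ?_ (norm_nonneg c)
      refine (expDist _ _ (by linarith [hdab])).trans ?_
      linarith [hdab]
    -- combine
    have hcomb : |A| ≤ ‖c‖ * (2 * (m * δ)) + C / R := by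
      have h1 : |A| ≤ ‖c * Complex.exp (((k * m * Real.pi / n : ℝ) : ℂ) * Complex.I) - B‖ := by
        have hAeq : A = (c * Complex.exp (((k * m * Real.pi / n : ℝ) : ℂ) * Complex.I) - B).im := by
          rw [Complex.sub_im, hBim, sub_zero, hA_def]
        rw [hAeq]
        exact Complex.abs_im_le_norm _
      refine h1.trans ?_
      refine (norm_sub_le_norm_sub_add_norm_sub _ (c * Complex.exp (((m * θ : ℝ) : ℂ) * Complex.I)) _).trans ?_
      exact add_le_add hterm1 hterm2
    have hδA : δ * (8 * ‖c‖ * m + 1) = |A| := by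
      rw [hδ_def]; field_simp
    have e1 : ‖c‖ * (2 * (m * δ)) ≤ |A| / 4 := by nlinarith
    have hM2 : 4 * C / |A| + 1 ≤ R := (le_max_right _ _).trans hMR
    have e2 : C / R ≤ |A| / 2 := by
      rw [div_le_iff₀ hR0]
      rw [div_add' _ _ _ (ne_of_gt hApos), div_le_iff₀ hApos] at hM2
      nlinarith
    linarith
  -- use the claim at k = 0 and k = 1
  have h0 := claim 0
  have h1 := claim 1
  simp only [Nat.cast_zero, zero_mul, zero_div, Complex.ofReal_zero, Complex.exp_zero, mul_one] at h0
  have hcim : c.im = 0 := h0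
  have hcre : c.re ≠ 0 := by
    intro hre
    exact hc0 (Complex.ext hre hcim)
  simp only [Nat.cast_one, one_mul] at h1
  rw [Complex.mul_im, Complex.exp_ofReal_mul_I_im, Complex.exp_ofReal_mul_I_re, hcim, zero_mul, add_zero] at h1
  have hsin : 0 < Real.sin (m * Real.pi / n) := by
    apply Real.sin_pos_of_pos_of_lt_pi
    · positivity
    · rw [div_lt_iff₀ npos]
      have : (m:ℝ) < n := by exact_mod_cast hmn
      nlinarith [Real.pi_pos]
  exact hcre (by nlinarith)

/-- For monic complex polynomials `f` and `g` of degree `n ≥ 1`, the imaginary components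
`I(f) = {z | Im (f z) = 0}` and `I(g)` coincide iff `f - g` is a constant real polynomial. -/
theorem stmt1 (n : ℕ) (hn : 1 ≤ n) (f g : Polynomial ℂ)
    (hf : f.Monic) (hg : g.Monic) (hfd : f.natDegree = n) (hgd : g.natDegree = n) :
    {z : ℂ | (f.eval z).im = 0} = {z : ℂ | (g.eval z).im = 0} ↔
      ∃ t : ℝ, ∀ z : ℂ, f.eval z - g.eval z = (t : ℂ) := by
  constructor
  · intro hset
    have H : ∀ z : ℂ, (f.eval z).im = 0 → ((f - g).eval z).im = 0 := by
      intro z hz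
      have hzg : (g.eval z).im = 0 := by
        have hmem : z ∈ {z : ℂ | (f.eval z).im = 0} := hz
        rw [hset] at hmem
        exact hmem
      rw [Polynomial.eval_sub, Complex.sub_im, hz, hzg, sub_zero]
    by_cases h0 : f - g = 0
    · exact ⟨0, fun z => by rw [← Polynomial.eval_sub, h0]; simp⟩
    · have hle : (f - g).natDegree ≤ n :=
        (Polynomial.natDegree_sub_le f g).trans (by rw [hfd, hgd]; simp)
      have hcoeff : (f - g).coeff n = 0 := by
        rw [Polynomial.coeff_sub]
        have h1 : f.coeff n = 1 := by rw [← hfd]; exact hf.coeff_natDegree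
        have h2 : g.coeff n = 1 := by rw [← hgd]; exact hg.coeff_natDegree
        rw [h1, h2, sub_self]
      have hlt : (f - g).natDegree < n := by
        rcases lt_or_eq_of_le hle with h | h
        · exact h
        · exfalso
          apply h0
          have hl : (f - g).leadingCoeff = 0 := by
            rw [Polynomial.leadingCoeff, h, hcoeff]
          exact Polynomial.leadingCoeff_eq_zero.mp hl
      rcases Nat.eq_zero_or_pos (f - g).natDegree with hd0 | hd1
      · obtain ⟨a, ha⟩ := Polynomial.natDegree_eq_zero.mp hd0
        have hdeg : 0 < f.degree := by
          apply Polynomial.natDegree_pos_iff_degree_pos.mp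
          omega
        obtain ⟨z₀, hz₀⟩ := Complex.exists_root hdeg
        have him : a.im = 0 := by
          have h2 := H z₀ (by rw [Polynomial.IsRoot.def] at hz₀; rw [hz₀]; rfl)
          rw [← ha] at h2
          simpa using h2
        refine ⟨a.re, fun z => ?_⟩
        rw [← Polynomial.eval_sub, ← ha, Polynomial.eval_C]
        exact Complex.ext rfl (by simpa using him)
      · exact absurd (key f (f - g) n hn hf hfd h0 hd1 hlt H) not_false
  · rintro ⟨t, ht⟩
    ext z
    simp only [Set.mem_setOf_eq]
    have h2 : (f.eval z).im - (g.eval z).im = 0 := by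
      have h3 := congrArg Complex.im (ht z)
      simpa using h3
    constructor <;> intro h <;> linarith
end

section
/- Let f be a nonconstant complex polynomial. Then every connected component of the set R(f) = {z ∈ ℂ : Re(f(z)) = 0} is unbounded; in other words, R(f) has no bounded connected component ('oval'). -/
open Set Metric Bornology

/-- For a nonconstant complex polynomial `f`, every connected component of
`R(f) = {z | Re (f z) = 0}` is unbounded. -/
theorem stmt3 (f : Polynomial ℂ) (hf : 0 < f.natDegree) :
    ∀ z ∈ {z : ℂ | (f.eval z).re = 0},
      ¬ Bornology.IsBounded (connectedComponentIn {z : ℂ | (f.eval z).re = 0} z) := by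
  intro z hz hb
  set S : Set ℂ := {z : ℂ | (f.eval z).re = 0} with hSdef
  have hcont : Continuous fun w : ℂ => f.eval w := f.continuous
  have hS : IsClosed S := isClosed_eq (Complex.continuous_re.comp hcont) continuous_const
  -- f.eval is an open map
  have han : AnalyticOnNhd ℂ (fun w : ℂ => f.eval w) univ := fun x _ =>
    (f.differentiable.analyticAt x)
  have hopen : ∀ s : Set ℂ, IsOpen s → IsOpen ((fun w : ℂ => f.eval w) '' s) := by
    rcases han.is_constant_or_isOpen isPreconnected_univ with ⟨w, hw⟩ | h
    · exfalso
      have : f = Polynomial.C w := Polynomial.funext fun r => by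
        simpa using hw r (mem_univ r)
      rw [this] at hf
      simp at hf
    · exact fun s hs => h s (subset_univ s) hs
  -- a radius containing the bounded component
  obtain ⟨R, hRpos, hKball⟩ := hb.subset_ball_lt 0 0
  -- compact ambient space
  set X : Set ℂ := S ∩ closedBall 0 (R + 1) with hXdef
  have hXcomp : IsCompact X := (isCompact_closedBall 0 (R + 1)).inter_left hS
  haveI : CompactSpace X := isCompact_iff_compactSpace.mp hXcomp
  have hzX : z ∈ X := ⟨hz, by
    have : z ∈ ball (0 : ℂ) R := hKball (mem_connectedComponentIn hz)
    exact mem_closedBall.mpr (le_of_lt (lt_of_lt_of_le (mem_ball.mp this) (by linarith)))⟩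
  set x : X := ⟨z, hzX⟩
  -- the connected component of x in X lies in the ball
  have hcc : connectedComponent x ⊆ (Subtype.val) ⁻¹' (ball (0 : ℂ) R) := by
    intro p hp
    have h1 : (Subtype.val '' connectedComponent x : Set ℂ) ⊆ connectedComponentIn S z := by
      have hXS : X ⊆ S := inter_subset_left
      have h2 : Subtype.val '' connectedComponent x ⊆ connectedComponentIn X z :=
        (connectedComponentIn_eq_image hzX).symm.subset
      exact h2.trans (connectedComponentIn_mono z hXS)
    exact hKball (h1 ⟨p, hp, rfl⟩)
  -- Šura-Bura: find a clopen set A' in X containing x, inside the ball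
  have hiInter := connectedComponent_eq_iInter_isClopen x
  set F : Set X := (Subtype.val) ⁻¹' (ball (0 : ℂ) R)ᶜ with hFdef
  have hFclosed : IsClosed F := isOpen_ball.isClosed_compl.preimage continuous_subtype_val
  have hFcomp : IsCompact F := hFclosed.isCompact
  have hdisj : F ∩ ⋂ s : { s : Set X // IsClopen s ∧ x ∈ s }, (s : Set X) = ∅ := by
    rw [← hiInter]
    ext p
    simp only [mem_inter_iff, mem_empty_iff_false, iff_false, not_and]
    intro hpF hpc
    exact hpF (hcc hpc)
  obtain ⟨t, ht⟩ := hFcomp.elim_finite_subfamily_closed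
    (fun s : { s : Set X // IsClopen s ∧ x ∈ s } => (s : Set X))
    (fun s => s.2.1.1) hdisj
  set A' : Set X := ⋂ s ∈ t, (s : Set X) with hA'def
  have hA'clopen : IsClopen A' := isClopen_biInter_finset fun s _ => s.2.1
  have hxA' : x ∈ A' := mem_iInter₂.mpr fun s _ => s.2.2
  have hA'ball : A' ⊆ (Subtype.val) ⁻¹' (ball (0 : ℂ) R) := by
    intro p hp
    by_contra hpb
    have : p ∈ F ∩ ⋂ s ∈ t, (s : Set X) := ⟨hpb, hp⟩
    rw [ht] at this
    exact this
  -- A' is open in X: get an open U in ℂ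
  obtain ⟨U, hUopen, hUeq⟩ := isOpen_induced_iff.mp hA'clopen.2
  set A : Set ℂ := Subtype.val '' A' with hAdef
  have hAcomp : IsCompact A := (hA'clopen.1.isCompact).image continuous_subtype_val
  have hAS : A ⊆ S := by rintro _ ⟨p, _, rfl⟩; exact p.2.1
  have hAball : A ⊆ ball (0 : ℂ) R := by rintro _ ⟨p, hp, rfl⟩; exact hA'ball hp
  have hAU : A ⊆ U := by
    rintro _ ⟨p, hp, rfl⟩
    rw [← hUeq] at hp
    exact hp
  set V : Set ℂ := U ∩ ball (0 : ℂ) R with hVdef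
  have hVopen : IsOpen V := hUopen.inter isOpen_ball
  have hAV : A ⊆ V := fun a ha => ⟨hAU ha, hAball ha⟩
  have hSV : S ∩ V ⊆ A := by
    rintro w ⟨hwS, hwU, hwb⟩
    have hwX : w ∈ X := ⟨hwS, mem_closedBall.mpr
      (le_of_lt (lt_of_lt_of_le (mem_ball.mp hwb) (by linarith)))⟩
    have : (⟨w, hwX⟩ : X) ∈ A' := by rw [← hUeq]; exact hwU
    exact ⟨⟨w, hwX⟩, this, rfl⟩
  -- the image of A in the imaginary axis
  set T : Set ℂ := (fun w : ℂ => f.eval w) '' A with hTdef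
  have hTcomp : IsCompact T := hAcomp.image hcont
  have hTne : (f.eval z) ∈ T := ⟨z, ⟨x, hxA', rfl⟩, rfl⟩
  set iA : Set ℂ := {w : ℂ | w.re = 0} with hiAdef
  -- the imaginary axis is preconnected
  have hconv : Convex ℝ iA := by
    intro p hp q hq a b _ _ _
    simp only [hiAdef, mem_setOf_eq] at hp hq ⊢
    simp [Complex.add_re, Complex.real_smul, Complex.mul_re, hp, hq]
  have hpre : IsPreconnected iA := hconv.isPreconnected
  -- key: the image of V intersected with the axis is inside T
  have hkey : (fun w : ℂ => f.eval w) '' V ∩ iA ⊆ T := by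
    rintro y ⟨⟨w, hwV, rfl⟩, hyre⟩
    exact ⟨w, hSV ⟨hyre, hwV⟩, rfl⟩
  -- apply preconnectedness to get a contradiction
  obtain ⟨M, hTM⟩ := hTcomp.isBounded.subset_ball 0
  have h1 : IsOpen ((fun w : ℂ => f.eval w) '' V) := hopen V hVopen
  have h2 : IsOpen Tᶜ := hTcomp.isClosed.isOpen_compl
  have hcover : iA ⊆ (fun w : ℂ => f.eval w) '' V ∪ Tᶜ := by
    intro y hy
    by_cases hyT : y ∈ T
    · left
      obtain ⟨w, hwA, rfl⟩ := hyT
      exact ⟨w, hAV hwA, rfl⟩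
    · right; exact hyT
  have hne1 : (iA ∩ (fun w : ℂ => f.eval w) '' V).Nonempty := by
    refine ⟨f.eval z, hz, ?_⟩
    obtain ⟨w, hwA, hwe⟩ := hTne
    exact ⟨w, hAV hwA, hwe⟩
  have hne2 : (iA ∩ Tᶜ).Nonempty := by
    refine ⟨((|M| + 1 : ℝ) : ℂ) * Complex.I, by simp [hiAdef], fun hmem => ?_⟩
    have := hTM hmem
    rw [mem_ball, dist_zero_right] at this
    have hnorm : ‖(|M| + 1 : ℝ) * Complex.I‖ = |M| + 1 := by
      rw [norm_mul, Complex.norm_I, mul_one, Complex.norm_real,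
        Real.norm_eq_abs, abs_of_nonneg (by positivity)]
    rw [hnorm] at this
    have : M ≤ |M| := le_abs_self M
    linarith [le_abs_self M, this]
  obtain ⟨y, hyiA, hyV, hyTc⟩ := hpre _ _ h1 h2 hcover hne1 hne2
  exact hyTc (hkey ⟨hyV, hyiA⟩)
end

section
/- Let r ≥ 0, θ ∈ ℝ, c, d ∈ ℝ and let f(z) = z³ − 3·r·exp(θ·i)·z + 2(c + d·i). Then there exists z ∈ ℂ with Im(f(z)) = 0 and f'(z) = 0 if and only if d² = r³·sin²(3θ/2). In particular this condition is independent of c. -/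
/-- For `f(z) = z³ - 3·r·exp(θi)·z + 2(c + di)` with `r ≥ 0`: the imaginary component
`I(f)` is singular (i.e. some point of `I(f)` is a critical point of `f`) iff
`d² = r³ sin²(3θ/2)`; the condition does not involve `c`. -/
theorem stmt10 (r θ c d : ℝ) (hr : 0 ≤ r) (f : ℂ → ℂ)
    (hf : ∀ z : ℂ, f z = z ^ 3 - 3 * (r : ℂ) * Complex.exp ((θ : ℂ) * Complex.I) * z
        + 2 * ((c : ℂ) + (d : ℂ) * Complex.I)) :
    (∃ z : ℂ, (f z).im = 0 ∧ deriv f z = 0) ↔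
      d ^ 2 = r ^ 3 * Real.sin (3 * θ / 2) ^ 2 := by
  have hfe : f = fun z => z ^ 3 - 3 * (r : ℂ) * Complex.exp ((θ : ℂ) * Complex.I) * z
        + 2 * ((c : ℂ) + (d : ℂ) * Complex.I) := funext hf
  subst hfe
  set a : ℂ := 3 * (r : ℂ) * Complex.exp ((θ : ℂ) * Complex.I) with ha
  set s : ℝ := Real.sqrt r with hsdef
  have hs2 : s ^ 2 = r := Real.sq_sqrt hr
  set w : ℂ := (s : ℂ) * Complex.exp (((θ/2 : ℝ) : ℂ) * Complex.I) with hw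
  have hw2 : 3 * w ^ 2 = a := by
    rw [hw, ha, mul_pow, ← Complex.exp_nat_mul]
    push_cast
    rw [show (s:ℂ)^2 = (r:ℂ) by exact_mod_cast congrArg (fun x : ℝ => (x:ℂ)) hs2]
    ring_nf
  -- derivative
  have hderiv : ∀ z : ℂ, deriv (fun z : ℂ => z ^ 3 - a * z
        + 2 * ((c : ℂ) + (d : ℂ) * Complex.I)) z = 3 * z ^ 2 - a := by
    intro z
    have h1 : HasDerivAt (fun z : ℂ => z ^ 3 - a * z
        + 2 * ((c : ℂ) + (d : ℂ) * Complex.I)) (3 * z ^ 2 - a) z := by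
      have := ((hasDerivAt_pow 3 z).sub ((hasDerivAt_id z).const_mul a)).add_const
        (2 * ((c : ℂ) + (d : ℂ) * Complex.I))
      simpa using this
    exact h1.deriv
  -- imaginary part of a·w
  have haw : (a * w).im = 3 * (r * s) * Real.sin (3 * θ / 2) := by
    have key : a * w = ((3*(r*s) : ℝ):ℂ) * Complex.exp (((3*θ/2 : ℝ):ℂ) * Complex.I) := by
      rw [ha, hw]
      calc 3 * (r:ℂ) * Complex.exp ((θ:ℂ) * Complex.I)
            * ((s:ℂ) * Complex.exp (((θ/2:ℝ):ℂ) * Complex.I))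
          = ((3*(r*s) : ℝ):ℂ) * (Complex.exp ((θ:ℂ) * Complex.I)
            * Complex.exp (((θ/2:ℝ):ℂ) * Complex.I)) := by push_cast; ring
        _ = ((3*(r*s) : ℝ):ℂ) * Complex.exp (((3*θ/2 : ℝ):ℂ) * Complex.I) := by
            rw [← Complex.exp_add]; congr 1; push_cast; ring
    rw [key, Complex.mul_im, Complex.exp_ofReal_mul_I_im]
    simp
  -- value of Im f at critical points
  have him : ∀ u : ℂ, 3 * u ^ 2 = a →
      (u ^ 3 - a * u + 2 * ((c : ℂ) + (d : ℂ) * Complex.I)).im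
        = -2/3 * (a * u).im + 2 * d := by
    intro u hu
    have h3 : u ^ 3 - a * u + 2 * ((c : ℂ) + (d : ℂ) * Complex.I)
        = ((-2/3 : ℝ):ℂ) * (a * u) + 2 * ((c : ℂ) + (d : ℂ) * Complex.I) := by
      rw [← hu]; push_cast; ring
    rw [h3]
    simp [Complex.add_im, Complex.mul_im]
  have hawn : (a * (-w)).im = -(3 * (r * s) * Real.sin (3 * θ / 2)) := by
    rw [mul_neg, Complex.neg_im, haw]
  constructor
  · rintro ⟨z, h1, h2⟩
    rw [hderiv] at h2
    have hz2 : 3 * z ^ 2 = a := by linear_combination h2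
    have hfac : (z - w) * (z + w) = 0 := by
      have h0 : (3:ℂ) * ((z - w) * (z + w)) = 0 := by linear_combination hz2 - hw2
      exact (mul_eq_zero.mp h0).resolve_left (by norm_num)
    simp only at h1
    rcases mul_eq_zero.mp hfac with h | h
    · have hzw : z = w := sub_eq_zero.mp h
      rw [hzw, him w hw2, haw] at h1
      have hd : d = r * s * Real.sin (3 * θ / 2) := by linarith
      rw [hd]
      linear_combination (r^2 * Real.sin (3*θ/2)^2) * hs2
    · have hzw : z = -w := eq_neg_of_add_eq_zero_left h
      have hw2' : 3 * (-w) ^ 2 = a := by rw [neg_pow]; simpa using hw2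
      rw [hzw, him (-w) hw2', hawn] at h1
      have hd : d = -(r * s * Real.sin (3 * θ / 2)) := by linarith
      rw [hd]
      linear_combination (r^2 * Real.sin (3*θ/2)^2) * hs2
  · intro hd2
    have he : d ^ 2 = (r * s * Real.sin (3 * θ / 2)) ^ 2 := by
      rw [hd2]; linear_combination (-(r^2) * Real.sin (3*θ/2)^2) * hs2
    have hfac : (d - r * s * Real.sin (3 * θ / 2)) * (d + r * s * Real.sin (3 * θ / 2)) = 0 := by
      linear_combination he
    rcases mul_eq_zero.mp hfac with h | h
    · refine ⟨w, ?_, ?_⟩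
      · simp only
        rw [him w hw2, haw]
        have : d = r * s * Real.sin (3 * θ / 2) := by linarith
        rw [this]; ring
      · rw [hderiv, ← hw2]; ring
    · refine ⟨-w, ?_, ?_⟩
      · simp only
        rw [him (-w) (by rw [neg_pow]; simpa using hw2), hawn]
        have : d = -(r * s * Real.sin (3 * θ / 2)) := by linarith
        rw [this]; ring
      · rw [hderiv, neg_pow, ← hw2]; ring
end

section
/- Let f(z) = z³·(z² − (5/2)·6^{1/5}·z + (5/3)·6^{2/5}). Then f has exactly two critical values, namely {f(ω) : ω ∈ ℂ, f'(ω) = 0} = {0, 1}; hence f is a Shabat polynomial with critical values 0 and 1. -/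
/-- The polynomial `f(z) = z³(z² - (5/2)·6^(1/5)·z + (5/3)·6^(2/5))` has exactly two
critical values, namely `0` and `1`; hence `f` is a Shabat polynomial. -/
theorem stmt12 (f : ℂ → ℂ)
    (hf : ∀ z : ℂ, f z = z ^ 3 *
      (z ^ 2 - (5 / 2) * (((6 : ℝ) ^ ((1 : ℝ) / 5) : ℝ) : ℂ) * z
        + (5 / 3) * (((6 : ℝ) ^ ((2 : ℝ) / 5) : ℝ) : ℂ))) :
    {α : ℂ | ∃ ω : ℂ, deriv f ω = 0 ∧ α = f ω} = {0, 1} := by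
  set a : ℂ := (((6 : ℝ) ^ ((1 : ℝ) / 5) : ℝ) : ℂ) with ha_def
  set b : ℂ := (((6 : ℝ) ^ ((2 : ℝ) / 5) : ℝ) : ℂ) with hb_def
  have ha5R : ((6 : ℝ) ^ ((1 : ℝ) / 5)) ^ (5 : ℕ) = 6 := by
    rw [← Real.rpow_natCast ((6 : ℝ) ^ ((1 : ℝ) / 5)) 5,
      ← Real.rpow_mul (by norm_num : (0:ℝ) ≤ 6)]
    norm_num
  have ha5 : a ^ 5 = 6 := by
    rw [ha_def]
    rw [show ((((6 : ℝ) ^ ((1 : ℝ) / 5) : ℝ) : ℂ)) ^ 5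
        = (((((6 : ℝ) ^ ((1 : ℝ) / 5)) ^ (5:ℕ) : ℝ)) : ℂ) by push_cast; ring]
    rw [ha5R]; norm_num
  have hbR : (6 : ℝ) ^ ((2 : ℝ) / 5) = ((6 : ℝ) ^ ((1 : ℝ) / 5)) ^ (2 : ℕ) := by
    rw [← Real.rpow_natCast ((6 : ℝ) ^ ((1 : ℝ) / 5)) 2,
      ← Real.rpow_mul (by norm_num : (0:ℝ) ≤ 6)]
    norm_num
  have hb : b = a ^ 2 := by
    rw [hb_def, ha_def, hbR]; push_cast; ring
  have hfe : ∀ z : ℂ, f z = z ^ 5 - (5/2) * a * z ^ 4 + (5/3) * a ^ 2 * z ^ 3 := by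
    intro z; rw [hf z, hb]; ring
  have hderiv : ∀ ω : ℂ, deriv f ω = 5 * ω ^ 2 * (ω - a) ^ 2 := by
    intro ω
    have hF : f = fun z : ℂ => z ^ 5 - (5/2) * a * z ^ 4 + (5/3) * a ^ 2 * z ^ 3 :=
      funext hfe
    have h1 : HasDerivAt (fun z : ℂ => z ^ 5 - (5/2) * a * z ^ 4 + (5/3) * a ^ 2 * z ^ 3)
        (5 * ω ^ 4 - (5/2) * a * (4 * ω ^ 3) + (5/3) * a ^ 2 * (3 * ω ^ 2)) ω := by
      have p5 : HasDerivAt (fun z : ℂ => z ^ 5) (5 * ω ^ 4) ω := by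
        simpa using hasDerivAt_pow 5 ω
      have p4 : HasDerivAt (fun z : ℂ => (5/2) * a * z ^ 4) ((5/2) * a * (4 * ω ^ 3)) ω := by
        simpa using (hasDerivAt_pow 4 ω).const_mul ((5/2) * a)
      have p3 : HasDerivAt (fun z : ℂ => (5/3) * a ^ 2 * z ^ 3)
          ((5/3) * a ^ 2 * (3 * ω ^ 2)) ω := by
        simpa using (hasDerivAt_pow 3 ω).const_mul ((5/3) * a ^ 2)
      exact (p5.sub p4).add p3
    rw [hF, h1.deriv]; ring
  have hfa : f a = 1 := by
    rw [hfe a]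
    have : a ^ 5 - (5/2) * a * a ^ 4 + (5/3) * a ^ 2 * a ^ 3 = a ^ 5 / 6 := by ring
    rw [this, ha5]; norm_num
  ext α
  simp only [Set.mem_setOf_eq, Set.mem_insert_iff, Set.mem_singleton_iff]
  constructor
  · rintro ⟨ω, h0, rfl⟩
    rw [hderiv ω] at h0
    have h0' : ω = 0 ∨ ω = a := by
      rcases mul_eq_zero.mp h0 with h | h
      · rcases mul_eq_zero.mp h with h | h
        · exact absurd h (by norm_num)
        · left; exact pow_eq_zero_iff (by norm_num) |>.mp h
      · right; have := pow_eq_zero_iff (n := 2) (by norm_num) |>.mp h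
        exact sub_eq_zero.mp this
    rcases h0' with rfl | rfl
    · left; rw [hfe]; ring
    · right; exact hfa
  · rintro (rfl | rfl)
    · exact ⟨0, by rw [hderiv]; ring, by rw [hfe]; ring⟩
    · exact ⟨a, by rw [hderiv]; ring, hfa.symm⟩
end

section
/- Let n ≥ 2 and c ∈ ℂ, and let f(z) = zⁿ − n·c·z. Then the set of critical values of f is exactly the solution set of a binomial equation: {f(ω) : ω ∈ ℂ, f'(ω) = 0} = {α ∈ ℂ : α^{n−1} = (1−n)^{n−1}·cⁿ}. In particular, when c = r·exp(θ·i) with r > 0, every critical value of f has modulus (n−1)·r^{n/(n−1)}. -/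
/-- For `n ≥ 2` and `c ∈ ℂ`, the critical values of `f(z) = zⁿ - n·c·z` form the
solution set of the binomial equation `α^(n-1) = (1-n)^(n-1)·cⁿ`.  In particular, when
`c = r·exp(θi)` with `r > 0`, every critical value has modulus `(n-1)·r^(n/(n-1))`. -/
theorem stmt13 (n : ℕ) (hn : 2 ≤ n) (c : ℂ) (f : ℂ → ℂ)
    (hf : ∀ z : ℂ, f z = z ^ n - (n : ℂ) * c * z) :
    ({α : ℂ | ∃ ω : ℂ, deriv f ω = 0 ∧ α = f ω} =
      {α : ℂ | α ^ (n - 1) = (1 - (n : ℂ)) ^ (n - 1) * c ^ n}) ∧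
    (∀ r θ : ℝ, 0 < r → c = (r : ℂ) * Complex.exp ((θ : ℂ) * Complex.I) →
      ∀ ω : ℂ, deriv f ω = 0 →
        ‖f ω‖ = ((n : ℝ) - 1) * r ^ ((n : ℝ) / ((n : ℝ) - 1))) := by
  have hnn : n - 1 + 1 = n := by omega
  have hn0 : (n : ℂ) ≠ 0 := by
    exact_mod_cast Nat.cast_ne_zero.mpr (by omega : n ≠ 0)
  have h1n : (1 : ℂ) - (n : ℂ) ≠ 0 := by
    intro h
    have : (n : ℂ) = 1 := by linear_combination -h
    have : n = 1 := by exact_mod_cast this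
    omega
  have hf' : f = fun z => z ^ n - (n : ℂ) * c * z := funext hf
  have hd : ∀ ω : ℂ, deriv f ω = (n : ℂ) * ω ^ (n - 1) - (n : ℂ) * c := by
    intro ω
    rw [hf']
    have h1 : HasDerivAt (fun z : ℂ => z ^ n - (n : ℂ) * c * z)
        ((n : ℂ) * ω ^ (n - 1) - (n : ℂ) * c) ω := by
      have := (hasDerivAt_pow n ω).sub ((hasDerivAt_id ω).const_mul ((n : ℂ) * c))
      simp only [mul_one] at this; exact this
    exact h1.deriv
  have hcrit : ∀ ω : ℂ, deriv f ω = 0 ↔ ω ^ (n - 1) = c := by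
    intro ω
    rw [hd]
    constructor
    · intro h
      have h2 : (n : ℂ) * (ω ^ (n - 1) - c) = 0 := by linear_combination h
      rcases mul_eq_zero.mp h2 with h3 | h3
      · exact absurd h3 hn0
      · exact sub_eq_zero.mp h3
    · intro h
      rw [h]; ring
  have hval : ∀ ω : ℂ, ω ^ (n - 1) = c → f ω = (1 - (n : ℂ)) * c * ω := by
    intro ω h
    rw [hf]
    have hpow : ω ^ n = c * ω := by rw [← hnn, pow_succ, h]
    rw [hpow]; ring
  constructor
  · ext α
    simp only [Set.mem_setOf_eq]
    constructor
    · rintro ⟨ω, hω, rfl⟩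
      rw [hcrit] at hω
      rw [hval ω hω, mul_pow, mul_pow, hω, mul_assoc, ← pow_succ, hnn]
    · intro h
      by_cases hc : c = 0
      · subst hc
        have hα : α = 0 := by
          have h0 : α ^ (n - 1) = 0 := by
            rw [h, zero_pow (by omega : n ≠ 0), mul_zero]
          exact pow_eq_zero_iff (by omega : n - 1 ≠ 0) |>.mp h0
        refine ⟨0, ?_, ?_⟩
        · rw [hd]; simp [zero_pow (by omega : n - 1 ≠ 0)]
        · rw [hf]; simp [hα, zero_pow (by omega : n ≠ 0)]
      · set ω := α / ((1 - (n : ℂ)) * c) with hωdef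
        have hne : (1 - (n : ℂ)) * c ≠ 0 := mul_ne_zero h1n hc
        have hωpow : ω ^ (n - 1) = c := by
          have key : ω ^ (n - 1) * ((1 - (n : ℂ)) * c) ^ (n - 1)
              = c * ((1 - (n : ℂ)) * c) ^ (n - 1) := by
            rw [hωdef, div_pow, div_mul_cancel₀ _ (pow_ne_zero _ hne), h,
              show c ^ n = c ^ (n - 1) * c by rw [← pow_succ, hnn], mul_pow]
            ring
          exact mul_right_cancel₀ (pow_ne_zero _ hne) key
        refine ⟨ω, (hcrit ω).mpr hωpow, ?_⟩
        rw [hval ω hωpow, hωdef, mul_div_cancel₀ _ hne]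
  · intro r θ hr hc ω hω
    rw [hcrit] at hω
    have habsc : ‖c‖ = r := by
      rw [hc]
      simp [Complex.norm_exp, abs_of_pos hr]
    have hωabs : ‖ω‖ ^ (n - 1) = r := by
      rw [← habsc, ← hω, norm_pow]
    have hanum : ((n : ℝ) - 1) ≠ 0 := by
      have : (2 : ℝ) ≤ n := by exact_mod_cast hn
      linarith
    have hcast : ((n - 1 : ℕ) : ℝ) = (n : ℝ) - 1 := by
      push_cast [Nat.cast_sub (by omega : 1 ≤ n)]; ring
    have haω : ‖ω‖ = r ^ (((n : ℝ) - 1)⁻¹) := by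
      have := Real.pow_rpow_inv_natCast (norm_nonneg ω) (by omega : n - 1 ≠ 0)
      rw [hωabs] at this
      rw [← this, hcast]
    have habs1n : ‖(1 - (n : ℂ))‖ = (n : ℝ) - 1 := by
      have he : (1 : ℂ) - (n : ℂ) = (((1 : ℝ) - n : ℝ) : ℂ) := by push_cast; ring
      have hle : (1 : ℝ) - n ≤ 0 := by
        have : (2 : ℝ) ≤ n := by exact_mod_cast hn
        linarith
      rw [he, Complex.norm_real, Real.norm_eq_abs, abs_of_nonpos hle]
      ring
    rw [hval ω hω, norm_mul, norm_mul, habsc, habs1n, haω]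
    rw [show (n : ℝ) / ((n : ℝ) - 1) = 1 + ((n : ℝ) - 1)⁻¹ by field_simp; ring]
    rw [Real.rpow_add hr, Real.rpow_one]
    ring
end

section
/- Let n ≥ 2 and a, b, c, d ∈ ℝ, and let f(z) = zⁿ − n(a + b·i)z + (n−1)(c + d·i). Then there exists z ∈ ℂ with Re(f(z)) = 0 and f'(z) = 0 if and only if there exist r ≥ 0 and θ ∈ ℝ such that a = r·cos(θ), b = r·sin(θ), and c = r^{n/(n−1)}·cos(n·θ/(n−1)). In particular this condition is independent of d. -/
open Complex

lemma polarRe (ρ ψ : ℝ) : ((ρ : ℂ) * Complex.exp ((ψ:ℂ) * I)).re = ρ * Real.cos ψ := by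
  simp [Complex.exp_ofReal_mul_I_re, Complex.mul_re]

lemma polarIm (ρ ψ : ℝ) : ((ρ : ℂ) * Complex.exp ((ψ:ℂ) * I)).im = ρ * Real.sin ψ := by
  simp [Complex.exp_ofReal_mul_I_im, Complex.mul_im]

lemma polarPow (ρ ψ : ℝ) (m : ℕ) :
    ((ρ : ℂ) * Complex.exp ((ψ:ℂ) * I)) ^ m
      = ((ρ ^ m : ℝ) : ℂ) * Complex.exp ((((m:ℝ) * ψ :ℝ):ℂ) * I) := by
  rw [mul_pow, ← Complex.exp_nat_mul]
  push_cast
  ring_nf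

lemma coreEquiv (n : ℕ) (hn : 2 ≤ n) (a b c d : ℝ) (f : ℂ → ℂ)
    (hf : ∀ z : ℂ, f z = z ^ n - (n : ℂ) * ((a : ℂ) + (b : ℂ) * Complex.I) * z
        + ((n : ℂ) - 1) * ((c : ℂ) + (d : ℂ) * Complex.I)) :
    (∃ z : ℂ, (f z).re = 0 ∧ deriv f z = 0) ↔
      ∃ z : ℂ, z ^ (n - 1) = (a : ℂ) + (b : ℂ) * I ∧ (z ^ n).re = c := by
  set w : ℂ := (a : ℂ) + (b : ℂ) * I with hw
  have hf' : f = fun z : ℂ => z ^ n - (n : ℂ) * w * z + ((n : ℂ) - 1) * ((c : ℂ) + (d : ℂ) * I) :=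
    funext hf
  subst hf'
  have hn0 : (n : ℂ) ≠ 0 := by exact_mod_cast (by omega : n ≠ 0)
  have hderiv : ∀ z : ℂ, deriv (fun z : ℂ => z ^ n - (n : ℂ) * w * z
      + ((n : ℂ) - 1) * ((c : ℂ) + (d : ℂ) * I)) z = (n : ℂ) * z ^ (n - 1) - (n : ℂ) * w := by
    intro z
    have h : HasDerivAt (fun z : ℂ => z ^ n - (n : ℂ) * w * z
        + ((n : ℂ) - 1) * ((c : ℂ) + (d : ℂ) * I)) ((n : ℂ) * z ^ (n - 1) - (n : ℂ) * w) z := by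
      have := ((hasDerivAt_pow n z).sub (((hasDerivAt_id z).const_mul ((n : ℂ) * w)))).add_const
        (((n : ℂ) - 1) * ((c : ℂ) + (d : ℂ) * I))
      simpa using this
    exact h.deriv
  constructor
  · rintro ⟨z, hre, hd⟩
    rw [hderiv z, sub_eq_zero] at hd
    have hz : z ^ (n - 1) = w := mul_left_cancel₀ hn0 hd
    refine ⟨z, hz, ?_⟩
    have hzn : z ^ n = w * z := by
      conv_lhs => rw [show n = (n - 1) + 1 by omega, pow_succ, hz]
    have hfz : z ^ n - (n : ℂ) * w * z + ((n : ℂ) - 1) * ((c : ℂ) + (d : ℂ) * I)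
        = ((n : ℂ) - 1) * (((c:ℂ) + (d:ℂ) * I) - z ^ n) := by
      rw [hzn]; ring
    beta_reduce at hre
    rw [hfz] at hre
    have hn1 : (n : ℂ) - 1 = ((n : ℝ) - 1 : ℝ) := by push_cast; ring
    have hre' : ((n:ℝ) - 1) * (c - (z ^ n).re) = 0 := by
      rw [hn1] at hre
      simpa [Complex.mul_re, Complex.sub_re, Complex.add_re, Complex.mul_im] using hre
    have hne : (n : ℝ) - 1 ≠ 0 := by
      have : (2:ℝ) ≤ n := by exact_mod_cast hn
      linarith
    have := mul_eq_zero.mp hre'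
    rcases this with h | h
    · exact absurd h hne
    · linarith [h]
  · rintro ⟨z, hz, hre⟩
    refine ⟨z, ?_, ?_⟩
    · have hzn : z ^ n = w * z := by
        conv_lhs => rw [show n = (n - 1) + 1 by omega, pow_succ, hz]
      have hfz : z ^ n - (n : ℂ) * w * z + ((n : ℂ) - 1) * ((c : ℂ) + (d : ℂ) * I)
          = ((n : ℂ) - 1) * (((c:ℂ) + (d:ℂ) * I) - z ^ n) := by
        rw [hzn]; ring
      beta_reduce
      rw [hfz]
      have hn1 : (n : ℂ) - 1 = ((n : ℝ) - 1 : ℝ) := by push_cast; ring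
      rw [hn1]
      simp [Complex.mul_re, Complex.sub_re, Complex.add_re, hre]
    · rw [hderiv z, hz, sub_self]





/-- For `n ≥ 2` and `f(z) = zⁿ - n(a + bi)z + (n-1)(c + di)`: the real component `R(f)`
is singular (some point of `R(f)` is a critical point of `f`) iff there exist `r ≥ 0`
and `θ ∈ ℝ` with `a = r cos θ`, `b = r sin θ` and `c = r^(n/(n-1))·cos(nθ/(n-1))`;
the condition does not involve `d`. -/
theorem stmt14 (n : ℕ) (hn : 2 ≤ n) (a b c d : ℝ) (f : ℂ → ℂ)
    (hf : ∀ z : ℂ, f z = z ^ n - (n : ℂ) * ((a : ℂ) + (b : ℂ) * Complex.I) * z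
        + ((n : ℂ) - 1) * ((c : ℂ) + (d : ℂ) * Complex.I)) :
    (∃ z : ℂ, (f z).re = 0 ∧ deriv f z = 0) ↔
      ∃ r θ : ℝ, 0 ≤ r ∧ a = r * Real.cos θ ∧ b = r * Real.sin θ ∧
        c = r ^ ((n : ℝ) / ((n : ℝ) - 1)) * Real.cos ((n : ℝ) * θ / ((n : ℝ) - 1)) := by
  rw [coreEquiv n hn a b c d f hf]
  have hne : (n : ℝ) - 1 ≠ 0 := by
    have : (2:ℝ) ≤ n := by exact_mod_cast hn
    linarith
  have hcast : ((n - 1 : ℕ) : ℝ) = (n : ℝ) - 1 := by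
    have h1 : 1 ≤ n := by omega
    push_cast [Nat.cast_sub h1]
    ring
  constructor
  · rintro ⟨z, hz, hre⟩
    set ρ := ‖z‖ with hρdef
    set φ := Complex.arg z with hφdef
    have hpolar : (ρ : ℂ) * Complex.exp ((φ : ℂ) * I) = z := Complex.norm_mul_exp_arg_mul_I z
    have hρ : 0 ≤ ρ := norm_nonneg z
    refine ⟨ρ ^ (n - 1), ((n : ℝ) - 1) * φ, pow_nonneg hρ _, ?_, ?_, ?_⟩
    · have h1 : ((ρ : ℂ) * Complex.exp ((φ : ℂ) * I)) ^ (n - 1) = (a : ℂ) + (b : ℂ) * I := by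
        rw [hpolar]; exact hz
      rw [polarPow] at h1
      have := congrArg Complex.re h1
      rw [polarRe] at this
      simp only [Complex.add_re, Complex.ofReal_re, Complex.mul_re, Complex.ofReal_im,
        Complex.I_re, Complex.I_im] at this
      norm_num at this
      rw [hcast] at this
      exact this.symm
    · have h1 : ((ρ : ℂ) * Complex.exp ((φ : ℂ) * I)) ^ (n - 1) = (a : ℂ) + (b : ℂ) * I := by
        rw [hpolar]; exact hz
      rw [polarPow] at h1
      have := congrArg Complex.im h1
      rw [polarIm] at this
      simp only [Complex.add_im, Complex.ofReal_im, Complex.mul_im, Complex.ofReal_re,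
        Complex.I_re, Complex.I_im] at this
      simp at this
      rw [← this, hcast]
    · have h2 : ((ρ : ℂ) * Complex.exp ((φ : ℂ) * I)) ^ n = z ^ n := by rw [hpolar]
      rw [polarPow] at h2
      have := congrArg Complex.re h2
      rw [polarRe, hre] at this
      have hrexp : (ρ ^ (n - 1) : ℝ) ^ ((n : ℝ) / ((n : ℝ) - 1)) = ρ ^ n := by
        rw [← Real.rpow_natCast ρ (n - 1), ← Real.rpow_mul hρ]
        rw [hcast]
        rw [show ((n : ℝ) - 1) * ((n : ℝ) / ((n : ℝ) - 1)) = (n : ℝ) by field_simp]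
        rw [Real.rpow_natCast]
      have hang : (n : ℝ) * (((n : ℝ) - 1) * φ) / ((n : ℝ) - 1) = (n : ℝ) * φ := by
        field_simp
      rw [hrexp, hang, ← this]
  · rintro ⟨r, θ, hr0, ha, hb, hc⟩
    set ρ : ℝ := r ^ ((1 : ℝ) / ((n : ℝ) - 1)) with hρdef
    set ψ : ℝ := θ / ((n : ℝ) - 1) with hψdef
    refine ⟨(ρ : ℂ) * Complex.exp ((ψ : ℂ) * I), ?_, ?_⟩
    · rw [polarPow]
      have h1 : ρ ^ (n - 1) = r := by
        rw [hρdef, ← Real.rpow_natCast _ (n - 1), ← Real.rpow_mul hr0, hcast]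
        rw [show (1 : ℝ) / ((n : ℝ) - 1) * ((n : ℝ) - 1) = 1 by field_simp]
        exact Real.rpow_one r
      have h2 : ((n - 1 : ℕ) : ℝ) * ψ = θ := by
        rw [hcast, hψdef]
        field_simp
      rw [h1, h2]
      apply Complex.ext
      · rw [polarRe]
        simp only [Complex.add_re, Complex.ofReal_re, Complex.mul_re, Complex.ofReal_im,
          Complex.I_re, Complex.I_im]
        rw [ha]; ring
      · rw [polarIm]
        simp only [Complex.add_im, Complex.ofReal_im, Complex.mul_im, Complex.ofReal_re,
          Complex.I_re, Complex.I_im]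
        rw [hb]; ring
    · rw [polarPow, polarRe]
      have h1 : ρ ^ n = r ^ ((n : ℝ) / ((n : ℝ) - 1)) := by
        rw [hρdef, ← Real.rpow_natCast _ n, ← Real.rpow_mul hr0]
        congr 1
        field_simp
      have h2 : (n : ℝ) * ψ = (n : ℝ) * θ / ((n : ℝ) - 1) := by
        rw [hψdef]; ring
      rw [h1, h2, ← hc]
end

section
/- Let n ≥ 1 and let f be a monic polynomial of degree n with real coefficients having n distinct real roots. Then every critical value of f is real (i.e., for every ω ∈ ℂ with f'(ω) = 0, f(ω) ∈ ℝ), and consequently the imaginary component I(f) = {z ∈ ℂ : Im(f(z)) = 0} is a connected subset of ℂ (the circular forest I(f) is a tree). -/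
open Real Finset

noncomputable def theta19 (s : Finset ℝ) (x y : ℝ) : ℝ :=
  ∑ r ∈ s, (π / 2 - Real.arctan ((x - r) / y))

lemma arctan_le_self19 {u : ℝ} (hu : 0 ≤ u) : Real.arctan u ≤ u := by
  calc Real.arctan u ≤ Real.tan (Real.arctan u) :=
        Real.le_tan (by rw [← Real.arctan_zero]; exact Real.arctan_strictMono.monotone hu)
          (Real.arctan_lt_pi_div_two u)
    _ = u := Real.tan_arctan u

lemma theta19_pos {s : Finset ℝ} (hne : s.Nonempty) (x : ℝ) (y : ℝ) :
    0 < theta19 s x y := by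
  have : ∀ r ∈ s, 0 < π / 2 - Real.arctan ((x - r) / y) := by
    intro r _
    have := Real.arctan_lt_pi_div_two ((x - r) / y)
    linarith
  calc (0:ℝ) = ∑ _r ∈ s, 0 := by simp
    _ < _ := Finset.sum_lt_sum_of_nonempty hne this

lemma theta19_lt {s : Finset ℝ} (hne : s.Nonempty) (x : ℝ) (y : ℝ) :
    theta19 s x y < s.card * π := by
  have : ∀ r ∈ s, π / 2 - Real.arctan ((x - r) / y) < π := by
    intro r _
    have := Real.neg_pi_div_two_lt_arctan ((x - r) / y)
    linarith
  calc theta19 s x y < ∑ _r ∈ s, π := Finset.sum_lt_sum_of_nonempty hne this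
    _ = s.card * π := by rw [Finset.sum_const, nsmul_eq_mul]

lemma theta19_strictAnti {s : Finset ℝ} (hne : s.Nonempty) {y : ℝ} (hy : 0 < y)
    {x₁ x₂ : ℝ} (hx : x₁ < x₂) : theta19 s x₂ y < theta19 s x₁ y := by
  apply Finset.sum_lt_sum_of_nonempty hne
  intro r _
  have h : (x₁ - r) / y < (x₂ - r) / y :=
    div_lt_div_of_pos_right (by linarith) hy
  have := Real.arctan_strictMono h
  linarith


lemma theta19_anti {s : Finset ℝ} {y : ℝ} (hy : 0 < y)
    {x₁ x₂ : ℝ} (hx : x₁ ≤ x₂) : theta19 s x₂ y ≤ theta19 s x₁ y := by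
  apply Finset.sum_le_sum
  intro r _
  have h : (x₁ - r) / y ≤ (x₂ - r) / y := by gcongr <;> linarith
  have := Real.arctan_strictMono.monotone h
  linarith

lemma theta19_continuous_x {s : Finset ℝ} {y : ℝ} : Continuous fun x => theta19 s x y := by
  unfold theta19
  exact continuous_finset_sum _ fun r _ =>
    continuous_const.sub (Real.continuous_arctan.comp
      ((continuous_id.sub continuous_const).div_const y))

lemma theta19_continuousAt_y {s : Finset ℝ} {x y : ℝ} (hy : y ≠ 0) :
    ContinuousAt (fun q : ℝ => theta19 s x q) y := by
  unfold theta19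
  apply tendsto_finset_sum
  intro r _
  apply ContinuousAt.sub continuousAt_const
  exact Real.continuous_arctan.continuousAt.comp (continuousAt_const.div continuousAt_id hy)

lemma theta19_le_one {s : Finset ℝ} (hne : s.Nonempty) {x y : ℝ} (hy : 0 < y)
    (hx : ∀ r ∈ s, r + s.card * y ≤ x) : theta19 s x y ≤ 1 := by
  have hcard : (0:ℝ) < s.card := by
    exact_mod_cast Finset.card_pos.mpr hne
  have hterm : ∀ r ∈ s, π / 2 - Real.arctan ((x - r) / y) ≤ 1 / s.card := by
    intro r hr
    have h1 : (s.card:ℝ) * y ≤ x - r := by have := hx r hr; linarith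
    have h2 : (s.card : ℝ) ≤ (x - r) / y := (le_div_iff₀ hy).mpr h1
    have ht : (0:ℝ) < (x - r) / y := lt_of_lt_of_le hcard h2
    rw [← Real.arctan_inv_of_pos ht]
    calc Real.arctan ((x - r)/y)⁻¹ ≤ ((x - r)/y)⁻¹ := arctan_le_self19 (by positivity)
      _ ≤ 1 / s.card := by rw [one_div]; exact inv_anti₀ hcard h2
  calc theta19 s x y ≤ ∑ _r ∈ s, (1 / s.card : ℝ) := Finset.sum_le_sum hterm
    _ = 1 := by
      rw [Finset.sum_const, nsmul_eq_mul]
      field_simp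

lemma theta19_ge {s : Finset ℝ} (hne : s.Nonempty) {x y : ℝ} (hy : 0 < y)
    (hx : ∀ r ∈ s, x + s.card * y ≤ r) : s.card * π - 1 ≤ theta19 s x y := by
  have hcard : (0:ℝ) < s.card := by exact_mod_cast Finset.card_pos.mpr hne
  have hterm : ∀ r ∈ s, π - 1 / s.card ≤ π / 2 - Real.arctan ((x - r) / y) := by
    intro r hr
    have h1 : (s.card:ℝ) * y ≤ r - x := by have := hx r hr; linarith
    have h2 : (s.card : ℝ) ≤ (r - x) / y := (le_div_iff₀ hy).mpr h1
    have ht : (0:ℝ) < (r - x) / y := lt_of_lt_of_le hcard h2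
    have harc : Real.arctan ((x - r) / y) = -Real.arctan ((r - x) / y) := by
      rw [← Real.arctan_neg]; ring_nf
    rw [harc]
    have : Real.arctan ((r - x)/y)⁻¹ ≤ 1 / s.card := by
      calc Real.arctan ((r - x)/y)⁻¹ ≤ ((r - x)/y)⁻¹ := arctan_le_self19 (by positivity)
        _ ≤ 1 / s.card := by rw [one_div]; exact inv_anti₀ hcard h2
    have := Real.arctan_inv_of_pos ht
    linarith
  calc (s.card * π - 1 : ℝ) = ∑ _r ∈ s, (π - 1 / s.card : ℝ) := by
        rw [Finset.sum_const, nsmul_eq_mul]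
        field_simp
    _ ≤ theta19 s x y := Finset.sum_le_sum hterm

lemma one_lt_kpi {k : ℕ} (hk1 : 1 ≤ k) : (1:ℝ) < k * π := by
  have hπ := Real.pi_gt_three
  have hk : (1:ℝ) ≤ k := by exact_mod_cast hk1
  nlinarith

lemma kpi_lt {k c : ℕ} (hk2 : k + 1 ≤ c) : (k:ℝ) * π < c * π - 1 := by
  have hπ := Real.pi_gt_three
  have hk : (k:ℝ) + 1 ≤ c := by exact_mod_cast hk2
  nlinarith

lemma theta19_exists {s : Finset ℝ} (hne : s.Nonempty) {y : ℝ} (hy : 0 < y) {k : ℕ}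
    (hk1 : 1 ≤ k) (hk2 : k + 1 ≤ s.card) :
    ∃ x, theta19 s x y = k * π := by
  set a := s.min' hne - s.card * y with ha
  set b := s.max' hne + s.card * y with hb
  have hcard : (0:ℝ) < s.card := by exact_mod_cast Finset.card_pos.mpr hne
  have hab : a ≤ b := by
    have h1 := s.min'_le _ (s.max'_mem hne)
    nlinarith
  have h1 : theta19 s b y ≤ 1 :=
    theta19_le_one hne hy (fun r hr => by have := s.le_max' r hr; rw [hb]; linarith)
  have h2 : s.card * π - 1 ≤ theta19 s a y :=
    theta19_ge hne hy (fun r hr => by have := s.min'_le r hr; rw [ha]; linarith)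
  have hmem : (k*π : ℝ) ∈ Set.Icc (theta19 s b y) (theta19 s a y) := by
    constructor
    · linarith [one_lt_kpi hk1]
    · linarith [kpi_lt hk2]
  obtain ⟨x, -, hx⟩ := intermediate_value_Icc' hab theta19_continuous_x.continuousOn hmem
  exact ⟨x, hx⟩

lemma theta19_loc {s : Finset ℝ} (hne : s.Nonempty) {y : ℝ} (hy : 0 < y) {k : ℕ}
    (hk1 : 1 ≤ k) (hk2 : k + 1 ≤ s.card) {x : ℝ} (hx : theta19 s x y = k * π) :
    s.min' hne - s.card * y ≤ x ∧ x ≤ s.max' hne + s.card * y := by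
  constructor
  · by_contra h
    push_neg at h
    have h2 : s.card * π - 1 ≤ theta19 s (s.min' hne - s.card * y) y :=
      theta19_ge hne hy (fun r hr => by have := s.min'_le r hr; linarith)
    have := theta19_strictAnti hne hy h
    have := kpi_lt hk2
    linarith
  · by_contra h
    push_neg at h
    have h1 : theta19 s (s.max' hne + s.card * y) y ≤ 1 :=
      theta19_le_one hne hy (fun r hr => by have := s.le_max' r hr; linarith)
    have := theta19_strictAnti hne hy h
    have := one_lt_kpi hk1
    linarith

open Classical in
noncomputable def gfun19 (s : Finset ℝ) (k : ℕ) (y : ℝ) : ℝ :=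
  if h : ∃ x, theta19 s x y = k * π then h.choose else 0

lemma gfun19_spec {s : Finset ℝ} (hne : s.Nonempty) {y : ℝ} (hy : 0 < y) {k : ℕ}
    (hk1 : 1 ≤ k) (hk2 : k + 1 ≤ s.card) :
    theta19 s (gfun19 s k y) y = k * π := by
  have h := theta19_exists hne hy hk1 hk2
  rw [gfun19]
  rw [dif_pos h]
  exact h.choose_spec

lemma gfun19_eq {s : Finset ℝ} (hne : s.Nonempty) {y : ℝ} (hy : 0 < y) {k : ℕ}
    {x : ℝ} (hx : theta19 s x y = k * π) : x = gfun19 s k y := by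
  have h : ∃ x, theta19 s x y = k * π := ⟨x, hx⟩
  rw [gfun19, dif_pos h]
  have hx' := h.choose_spec
  rcases lt_trichotomy x h.choose with hlt | heq | hgt
  · have := theta19_strictAnti hne hy hlt; exfalso; rw [hx, hx'] at this; exact lt_irrefl _ this
  · exact heq
  · have := theta19_strictAnti hne hy hgt; exfalso; rw [hx, hx'] at this; exact lt_irrefl _ this

lemma gfun19_continuousAt {s : Finset ℝ} (hne : s.Nonempty) {k : ℕ}
    (hk1 : 1 ≤ k) (hk2 : k + 1 ≤ s.card) {y : ℝ} (hy : 0 < y) :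
    ContinuousAt (gfun19 s k) y := by
  rw [ContinuousAt, Metric.tendsto_nhds]
  intro ε hε
  set g := gfun19 s k y with hg
  have hspec : theta19 s g y = k * π := gfun19_spec hne hy hk1 hk2
  have hlt1 : (k:ℝ) * π < theta19 s (g - ε/2) y := by
    rw [← hspec]; exact theta19_strictAnti hne hy (by linarith)
  have hlt2 : theta19 s (g + ε/2) y < (k:ℝ) * π := by
    rw [← hspec]; exact theta19_strictAnti hne hy (by linarith)
  have e1 : ∀ᶠ y' in nhds y, (k:ℝ) * π < theta19 s (g - ε/2) y' :=
    (theta19_continuousAt_y hy.ne').eventually_mem (Ioi_mem_nhds hlt1)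
  have e2 : ∀ᶠ y' in nhds y, theta19 s (g + ε/2) y' < (k:ℝ) * π :=
    (theta19_continuousAt_y hy.ne').eventually_mem (Iio_mem_nhds hlt2)
  have e3 : ∀ᶠ y' in nhds y, 0 < y' := eventually_gt_nhds hy
  filter_upwards [e1, e2, e3] with y' h1 h2 h3
  have hspec' : theta19 s (gfun19 s k y') y' = k * π := gfun19_spec hne h3 hk1 hk2
  have hgt : g - ε/2 < gfun19 s k y' := by
    by_contra h
    push_neg at h
    have := theta19_anti (s := s) h3 h
    rw [hspec'] at this
    linarith
  have hlt : gfun19 s k y' < g + ε/2 := by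
    by_contra h
    push_neg at h
    have := theta19_anti (s := s) h3 h
    rw [hspec'] at this
    linarith
  rw [Real.dist_eq, abs_lt]
  constructor <;> [linarith; linarith]

lemma factor19 (w : ℂ) (hw : 0 < w.im) :
    w = (‖w‖ : ℂ) *
      Complex.exp (↑(π/2 - Real.arctan (w.re/w.im)) * Complex.I) := by
  set t := w.re / w.im with ht
  have him := hw.ne'
  have hsq : w.re * w.re + w.im * w.im = w.im ^ 2 * (1 + t ^ 2) := by
    rw [ht]; field_simp; ring
  have habs : ‖w‖ = w.im * Real.sqrt (1 + t ^ 2) := by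
    rw [Complex.norm_def, Complex.normSq_apply, hsq, Real.sqrt_mul (sq_nonneg _),
      Real.sqrt_sq hw.le]
  have hs : (0:ℝ) < Real.sqrt (1 + t ^ 2) := Real.sqrt_pos.mpr (by positivity)
  rw [Complex.exp_mul_I]
  apply Complex.ext <;>
    simp only [Complex.add_re, Complex.add_im, Complex.mul_re, Complex.mul_im,
      Complex.ofReal_re, Complex.ofReal_im, Complex.I_re, Complex.I_im,
      ← Complex.ofReal_cos, ← Complex.ofReal_sin,
      Real.cos_pi_div_two_sub, Real.sin_pi_div_two_sub,
      Real.sin_arctan, Real.cos_arctan, habs]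
  · rw [ht]; field_simp; ring
  · rw [ht]; field_simp; ring

lemma prod19 {s : Finset ℝ} (z : ℂ) (hz : 0 < z.im) :
    ∏ r ∈ s, (z - (r:ℂ)) =
      ((∏ r ∈ s, ‖z - (r:ℂ)‖ : ℝ) : ℂ) *
        Complex.exp (↑(theta19 s z.re z.im) * Complex.I) := by
  have hfac : ∀ r ∈ s, z - (r:ℂ) = (‖z - (r:ℂ)‖ : ℂ) *
      Complex.exp (↑(π/2 - Real.arctan ((z.re - r)/z.im)) * Complex.I) := by
    intro r _
    have h1 : (z - (r:ℂ)).im = z.im := by simp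
    have h2 : (z - (r:ℂ)).re = z.re - r := by simp
    nth_rewrite 1 [factor19 (z - (r:ℂ)) (by rw [h1]; exact hz)]
    rw [h1, h2]
  rw [Finset.prod_congr rfl hfac, Finset.prod_mul_distrib, ← Complex.exp_sum]
  push_cast
  rw [← Finset.sum_mul]
  norm_cast
  simp [theta19]

lemma im_prod19 {s : Finset ℝ} (z : ℂ) (hz : 0 < z.im) :
    (∏ r ∈ s, (z - (r:ℂ))).im =
      (∏ r ∈ s, ‖z - (r:ℂ)‖) * Real.sin (theta19 s z.re z.im) := by
  rw [prod19 z hz, Complex.exp_mul_I]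
  set P := ∏ r ∈ s, ‖z - (r:ℂ)‖ with hP
  simp [← Complex.ofReal_cos, ← Complex.ofReal_sin, Complex.mul_im]

lemma absprod19_pos {s : Finset ℝ} (z : ℂ) (hz : z.im ≠ 0) :
    0 < ∏ r ∈ s, ‖z - (r:ℂ)‖ := by
  apply Finset.prod_pos
  intro r _
  rw [norm_pos_iff]
  intro h
  apply hz
  have : (z - (r:ℂ)).im = z.im := by simp
  rw [← this, h]
  simp

noncomputable def curve19 (s : Finset ℝ) (k : ℕ) : Set ℂ :=
  (fun y : ℝ => (gfun19 s k y : ℂ) + (y:ℂ) * Complex.I) '' Set.Ioi 0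

lemma curve19_mem {s : Finset ℝ} (hne : s.Nonempty) {k : ℕ}
    (hk1 : 1 ≤ k) (hk2 : k + 1 ≤ s.card) {z : ℂ} :
    z ∈ curve19 s k ↔ 0 < z.im ∧ theta19 s z.re z.im = k * π := by
  constructor
  · rintro ⟨y, hy, rfl⟩
    have hre : ((gfun19 s k y : ℂ) + (y:ℂ) * Complex.I).re = gfun19 s k y := by simp
    have him : ((gfun19 s k y : ℂ) + (y:ℂ) * Complex.I).im = y := by simp
    rw [hre, him]
    exact ⟨hy, gfun19_spec hne hy hk1 hk2⟩
  · rintro ⟨hz, hth⟩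
    refine ⟨z.im, hz, ?_⟩
    show (gfun19 s k z.im : ℂ) + (z.im : ℂ) * Complex.I = z
    rw [← gfun19_eq hne hz hth]
    exact Complex.re_add_im z

lemma curve19_preconnected {s : Finset ℝ} (hne : s.Nonempty) {k : ℕ}
    (hk1 : 1 ≤ k) (hk2 : k + 1 ≤ s.card) : IsPreconnected (curve19 s k) := by
  apply isPreconnected_Ioi.image
  intro y hy
  have : ContinuousAt (fun y : ℝ => (gfun19 s k y : ℂ) + (y:ℂ) * Complex.I) y := by
    apply ContinuousAt.add
    · exact Complex.continuous_ofReal.continuousAt.comp (gfun19_continuousAt hne hk1 hk2 hy)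
    · exact Complex.continuous_ofReal.continuousAt.mul continuousAt_const
  exact this.continuousWithinAt

lemma curve19_closure {s : Finset ℝ} (hne : s.Nonempty) {k : ℕ}
    (hk1 : 1 ≤ k) (hk2 : k + 1 ≤ s.card) :
    ∃ x : ℝ, (x:ℂ) ∈ closure (curve19 s k) := by
  set yseq : ℕ → ℝ := fun j => 1 / (j + 1) with hyseq
  have hypos : ∀ j, 0 < yseq j := fun j => by positivity
  have hyle : ∀ j, yseq j ≤ 1 := fun j => by
    rw [hyseq]
    rw [div_le_one (by positivity)]
    simp
  set u : ℕ → ℝ := fun j => gfun19 s k (yseq j) with hu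
  have hub : ∀ j, u j ∈ Set.Icc (s.min' hne - s.card) (s.max' hne + s.card) := by
    intro j
    have hloc := theta19_loc hne (hypos j) hk1 hk2 (gfun19_spec hne (hypos j) hk1 hk2)
    have hcy : (s.card : ℝ) * yseq j ≤ s.card := by
      have := hyle j
      have hc : (0:ℝ) ≤ s.card := by positivity
      nlinarith
    have hcy0 : (0:ℝ) ≤ (s.card : ℝ) * yseq j := by positivity
    constructor <;> [linarith [hloc.1]; linarith [hloc.2]]
  obtain ⟨xs, _, φ, hφ, hlim⟩ := isCompact_Icc.tendsto_subseq hub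
  refine ⟨xs, ?_⟩
  have hytend : Filter.Tendsto (fun j => yseq (φ j)) Filter.atTop (nhds 0) := by
    have h := Filter.Tendsto.comp (tendsto_one_div_add_atTop_nhds_zero_nat (𝕜 := ℝ)) hφ.tendsto_atTop
    exact h
  have hztend : Filter.Tendsto
      (fun j => (u (φ j) : ℂ) + (yseq (φ j) : ℂ) * Complex.I)
      Filter.atTop (nhds ((xs : ℂ) + (0:ℂ) * Complex.I)) := by
    apply Filter.Tendsto.add
    · exact (Complex.continuous_ofReal.continuousAt.tendsto).comp hlim
    · exact (((Complex.continuous_ofReal.continuousAt.tendsto).comp hytend).mul_const Complex.I)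
  rw [show ((xs : ℂ) + (0:ℂ) * Complex.I) = (xs:ℂ) by ring] at hztend
  apply mem_closure_of_tendsto hztend
  filter_upwards with j
  exact ⟨yseq (φ j), hypos (φ j), rfl⟩

open Polynomial in
lemma poly_eq19 {n : ℕ} (f : Polynomial ℝ) (hf : f.Monic) (hd : f.natDegree = n)
    (hroots : f.roots.toFinset.card = n) (z : ℂ) :
    (f.map (algebraMap ℝ ℂ)).eval z = ∏ r ∈ f.roots.toFinset, (z - (r:ℂ)) := by
  have hcard : Multiset.card f.roots = n :=
    le_antisymm (hd ▸ f.card_roots') (by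
      calc n = f.roots.toFinset.card := hroots.symm
        _ = Multiset.card f.roots.dedup := by rw [← Multiset.toFinset_val]; rfl
        _ ≤ Multiset.card f.roots := Multiset.card_le_card (Multiset.dedup_le _))
  have hdedup : f.roots.dedup = f.roots :=
    Multiset.eq_of_le_of_card_le (Multiset.dedup_le _) (by
      rw [hcard]
      rw [show Multiset.card f.roots.dedup = f.roots.toFinset.card by
        rw [← Multiset.toFinset_val]; rfl]
      exact hroots.ge)
  have hsplits : Splits f := (splits_iff_card_roots).mpr (by rw [hcard, hd])
  have heq := hsplits.eq_prod_roots_of_monic hf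
  conv_lhs => rw [heq]
  rw [Polynomial.map_multiset_prod, Multiset.map_map, eval_multiset_prod, Multiset.map_map]
  rw [Finset.prod_eq_multiset_prod, Multiset.toFinset_val, hdedup]
  congr 1
  apply Multiset.map_congr rfl
  intro r _
  simp

open Polynomial in
lemma eval_real19 (f : Polynomial ℝ) (x : ℝ) :
    (f.map (algebraMap ℝ ℂ)).eval (x:ℂ) = ((f.eval x : ℝ) : ℂ) := by
  rw [show ((x:ℝ):ℂ) = algebraMap ℝ ℂ x from rfl, Polynomial.eval_map,
    Polynomial.eval₂_at_apply]
  rfl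

open Polynomial in
lemma eval_conj19 (f : Polynomial ℝ) (z : ℂ) :
    (f.map (algebraMap ℝ ℂ)).eval ((starRingEnd ℂ) z) =
      (starRingEnd ℂ) ((f.map (algebraMap ℝ ℂ)).eval z) := by
  rw [Polynomial.eval_map, Polynomial.eval_map, ← Polynomial.aeval_def, ← Polynomial.aeval_def]
  exact Polynomial.aeval_conj f z

open Polynomial in
lemma crit19 {n : ℕ} (hn : 1 ≤ n) (f : Polynomial ℝ) (hf : f.Monic) (hd : f.natDegree = n)
    (hroots : f.roots.toFinset.card = n) :
    ∀ ω : ℂ, (derivative (f.map (algebraMap ℝ ℂ))).eval ω = 0 →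
      ((f.map (algebraMap ℝ ℂ)).eval ω).im = 0 := by
  intro ω hω
  rw [Polynomial.derivative_map] at hω
  set g := derivative f with hg
  have hcard : Multiset.card f.roots = n :=
    le_antisymm (hd ▸ f.card_roots') (by
      calc n = f.roots.toFinset.card := hroots.symm
        _ = Multiset.card f.roots.dedup := by rw [← Multiset.toFinset_val]; rfl
        _ ≤ Multiset.card f.roots := Multiset.card_le_card (Multiset.dedup_le _))
  obtain ⟨m, rfl⟩ : ∃ m, n = m + 1 := ⟨n - 1, by omega⟩
  have hg0 : g ≠ 0 := by
    intro h
    have hc : g.coeff m = f.coeff (m + 1) * (m + 1) := coeff_derivative f m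
    rw [← hd, hf.coeff_natDegree] at hc
    rw [h] at hc
    have hpos : (0:ℝ) < (m:ℝ) + 1 := by positivity
    rw [coeff_zero] at hc
    linarith
  have hgdeg : g.natDegree ≤ m := by
    have := natDegree_derivative_le f
    rw [← hg] at this
    omega
  have hgcard_ge : m ≤ Multiset.card g.roots := by
    have := card_roots_le_derivative f
    rw [← hg, hcard] at this
    omega
  have hgcard : Multiset.card g.roots = g.natDegree :=
    le_antisymm g.card_roots' (hgdeg.trans hgcard_ge)
  have hωroot : ω ∈ (g.map (algebraMap ℝ ℂ)).roots := by
    rw [mem_roots ((Polynomial.map_ne_zero_iff (algebraMap ℝ ℂ).injective).mpr hg0)]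
    exact hω
  rw [← roots_map_of_injective_of_card_eq_natDegree (algebraMap ℝ ℂ).injective hgcard]
    at hωroot
  obtain ⟨r, -, rfl⟩ := Multiset.mem_map.mp hωroot
  rw [show algebraMap ℝ ℂ r = ((r:ℝ):ℂ) from rfl, eval_real19]
  simp

/-- If `f` is a monic real polynomial of degree `n ≥ 1` with `n` distinct real roots,
then every critical value of `f` (viewed over `ℂ`) is real, and consequently the
imaginary component `I(f) = {z : ℂ | Im (f z) = 0}` is a connected subset of `ℂ`
(the circular forest `I(f)` is a tree). -/
theorem stmt19 (n : ℕ) (hn : 1 ≤ n) (f : Polynomial ℝ)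
    (hf : f.Monic) (hd : f.natDegree = n)
    (hroots : f.roots.toFinset.card = n) :
    (∀ ω : ℂ, (Polynomial.derivative (f.map (algebraMap ℝ ℂ))).eval ω = 0 →
      ((f.map (algebraMap ℝ ℂ)).eval ω).im = 0) ∧
    IsConnected {z : ℂ | ((f.map (algebraMap ℝ ℂ)).eval z).im = 0} := by
  refine ⟨crit19 hn f hf hd hroots, ?_⟩
  set s := f.roots.toFinset with hs
  have hsc : s.card = n := hroots
  have hne : s.Nonempty := Finset.card_pos.mp (by omega)
  have heval : ∀ z : ℂ, (f.map (algebraMap ℝ ℂ)).eval z = ∏ r ∈ s, (z - (r:ℂ)) :=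
    poly_eq19 f hf hd hroots
  set I := {z : ℂ | ((f.map (algebraMap ℝ ℂ)).eval z).im = 0} with hI
  have hR : {z : ℂ | z.im = 0} ⊆ I := by
    intro z hz
    have hzz : ((z.re : ℝ) : ℂ) = z := by
      apply Complex.ext <;> simp [hz.symm]
    show ((f.map (algebraMap ℝ ℂ)).eval z).im = 0
    rw [← hzz, eval_real19]
    simp
  have hRpre : IsPreconnected {z : ℂ | z.im = 0} := by
    have : {z : ℂ | z.im = 0} = Set.range (Complex.ofReal) := by
      ext z
      constructor
      · intro hz
        exact ⟨z.re, by apply Complex.ext <;> simp [hz.symm]⟩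
      · rintro ⟨x, rfl⟩; simp
    rw [this, ← Set.image_univ]
    exact isPreconnected_univ.image _ Complex.continuous_ofReal.continuousOn
  have hconj : ∀ z : ℂ, z ∈ I → (starRingEnd ℂ) z ∈ I := by
    intro z hz
    show ((f.map (algebraMap ℝ ℂ)).eval ((starRingEnd ℂ) z)).im = 0
    rw [eval_conj19, Complex.conj_im, neg_eq_zero]
    exact hz
  have hmem_pos : ∀ z : ℂ, 0 < z.im → (z ∈ I ↔ Real.sin (theta19 s z.re z.im) = 0) := by
    intro z hz
    rw [hI, Set.mem_setOf_eq, heval, im_prod19 z hz]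
    constructor
    · intro h
      rcases mul_eq_zero.mp h with h | h
      · exact absurd h (absprod19_pos z hz.ne').ne'
      · exact h
    · intro h; rw [h, mul_zero]
  have hcurve_sub : ∀ k : ℕ, 1 ≤ k → k + 1 ≤ n → curve19 s k ⊆ I := by
    intro k hk1 hk2 z hzc
    rw [curve19_mem hne hk1 (by rw [hsc]; exact hk2)] at hzc
    rw [hmem_pos z hzc.1, hzc.2]
    exact Real.sin_nat_mul_pi k
  have hx : ∀ k : ℕ, ∃ x : ℝ, (1 ≤ k ∧ k + 1 ≤ n) → (x:ℂ) ∈ closure (curve19 s k) := by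
    intro k
    by_cases h : 1 ≤ k ∧ k + 1 ≤ n
    · obtain ⟨x, hx⟩ := curve19_closure hne h.1 (by rw [hsc]; exact h.2)
      exact ⟨x, fun _ => hx⟩
    · exact ⟨0, fun hc => absurd hc h⟩
  choose xf hxf using hx
  set D : ℕ → Set ℂ := fun k => insert ((xf k : ℝ) : ℂ) (curve19 s k) with hD
  set E : ℕ → Set ℂ := fun k => ({z : ℂ | z.im = 0} ∪ D k) ∪ (starRingEnd ℂ) '' D k with hE
  have hDsub : ∀ k : ℕ, 1 ≤ k → k + 1 ≤ n → D k ⊆ I := by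
    intro k hk1 hk2 z hz
    rcases Set.mem_insert_iff.mp hz with rfl | hz
    · exact hR (by simp)
    · exact hcurve_sub k hk1 hk2 hz
  have hEsub : ∀ k : ℕ, 1 ≤ k → k + 1 ≤ n → E k ⊆ I := by
    intro k hk1 hk2 z hz
    rcases hz with (hz | hz) | ⟨w, hw, rfl⟩
    · exact hR hz
    · exact hDsub k hk1 hk2 hz
    · exact hconj w (hDsub k hk1 hk2 hw)
  have hEpre : ∀ k : ℕ, 1 ≤ k → k + 1 ≤ n → IsPreconnected (E k) := by
    intro k hk1 hk2
    have hk2' : k + 1 ≤ s.card := by rw [hsc]; exact hk2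
    have hDpre : IsPreconnected (D k) := by
      apply (curve19_preconnected hne hk1 hk2').subset_closure (Set.subset_insert _ _)
      exact Set.insert_subset (hxf k ⟨hk1, hk2⟩) subset_closure
    have hDconj : IsPreconnected ((starRingEnd ℂ) '' D k) :=
      hDpre.image _ (Complex.continuous_conj).continuousOn
    have h1 : IsPreconnected ({z : ℂ | z.im = 0} ∪ D k) :=
      IsPreconnected.union ((xf k : ℝ) : ℂ) (by simp) (Set.mem_insert _ _) hRpre hDpre
    apply IsPreconnected.union ((xf k : ℝ) : ℂ) ?_ ?_ h1 hDconj
    · exact Set.mem_union_left _ (by simp)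
    · exact ⟨((xf k : ℝ) : ℂ), Set.mem_insert _ _, Complex.conj_ofReal _⟩
  -- decomposition of I
  have hIeq : I = ⋃₀ (insert {z : ℂ | z.im = 0} (E '' Set.Icc 1 (n-1))) := by
    apply Set.eq_of_subset_of_subset
    · intro z hz
      rcases lt_trichotomy z.im 0 with hlt | heq | hgt
      · -- lower half plane
        have hcz : ((starRingEnd ℂ) z).im > 0 := by simp [hlt]
        have hczI : (starRingEnd ℂ) z ∈ I := hconj z hz
        obtain ⟨k, hk1, hk2, hkc⟩ : ∃ k : ℕ, 1 ≤ k ∧ k + 1 ≤ n ∧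
            (starRingEnd ℂ) z ∈ curve19 s k := by
          rw [hmem_pos _ hcz, Real.sin_eq_zero_iff] at hczI
          obtain ⟨j, hj⟩ := hczI
          have hθpos := theta19_pos hne ((starRingEnd ℂ) z).re ((starRingEnd ℂ) z).im
          have hθlt := theta19_lt hne ((starRingEnd ℂ) z).re ((starRingEnd ℂ) z).im
          rw [← hj] at hθpos hθlt
          rw [hsc] at hθlt
          have hj0 : 0 < j := by
            have : (0:ℝ) < j := by nlinarith [Real.pi_pos]
            exact_mod_cast this
          have hjn : j < n := by
            have : (j:ℝ) < n := by nlinarith [Real.pi_pos]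
            exact_mod_cast this
          refine ⟨j.toNat, by omega, by omega, ?_⟩
          rw [curve19_mem hne (by omega) (by rw [hsc]; omega)]
          refine ⟨hcz, ?_⟩
          rw [← hj]
          congr 1
          have h' := Int.toNat_of_nonneg hj0.le
          exact_mod_cast h'.symm
        refine Set.mem_sUnion.mpr ⟨E k, Set.mem_insert_iff.mpr (Or.inr ⟨k, ?_, rfl⟩), ?_⟩
        · simp only [Set.mem_Icc]; omega
        · refine Or.inr ⟨(starRingEnd ℂ) z, Set.mem_insert_iff.mpr (Or.inr hkc), ?_⟩
          simp
      · exact Set.mem_sUnion.mpr ⟨{z : ℂ | z.im = 0}, Set.mem_insert _ _, heq⟩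
      · obtain ⟨k, hk1, hk2, hkc⟩ : ∃ k : ℕ, 1 ≤ k ∧ k + 1 ≤ n ∧ z ∈ curve19 s k := by
          rw [hmem_pos _ hgt, Real.sin_eq_zero_iff] at hz
          obtain ⟨j, hj⟩ := hz
          have hθpos := theta19_pos hne z.re z.im
          have hθlt := theta19_lt hne z.re z.im
          rw [← hj] at hθpos hθlt
          rw [hsc] at hθlt
          have hj0 : 0 < j := by
            have : (0:ℝ) < j := by nlinarith [Real.pi_pos]
            exact_mod_cast this
          have hjn : j < n := by
            have : (j:ℝ) < n := by nlinarith [Real.pi_pos]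
            exact_mod_cast this
          refine ⟨j.toNat, by omega, by omega, ?_⟩
          rw [curve19_mem hne (by omega) (by rw [hsc]; omega)]
          refine ⟨hgt, ?_⟩
          rw [← hj]
          congr 1
          have h' := Int.toNat_of_nonneg hj0.le
          exact_mod_cast h'.symm
        refine Set.mem_sUnion.mpr ⟨E k, Set.mem_insert_iff.mpr (Or.inr ⟨k, ?_, rfl⟩), ?_⟩
        · simp only [Set.mem_Icc]; omega
        · exact Or.inl (Or.inr (Set.mem_insert_iff.mpr (Or.inr hkc)))
    · intro z hz
      obtain ⟨t, ht, hzt⟩ := Set.mem_sUnion.mp hz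
      rcases Set.mem_insert_iff.mp ht with rfl | ⟨k, hk, rfl⟩
      · exact hR hzt
      · rw [Set.mem_Icc] at hk
        exact hEsub k hk.1 (by omega) hzt
  constructor
  · exact ⟨(0:ℂ), hR (by simp)⟩
  · rw [hIeq]
    apply isPreconnected_sUnion (0:ℂ)
    · intro t ht
      rcases Set.mem_insert_iff.mp ht with rfl | ⟨k, hk, rfl⟩
      · simp
      · exact Or.inl (Or.inl (by simp))
    · intro t ht
      rcases Set.mem_insert_iff.mp ht with rfl | ⟨k, hk, rfl⟩
      · exact hRpre
      · rw [Set.mem_Icc] at hk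
        exact hEpre k hk.1 (by omega)
end
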